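/- arXiv:2101.01612 — 6 statements merged into one kernel-verified Lean document; each statement's English description precedes it below -/
import Mathlib

section
/- Fix c, k₀, B̃, g_tr, v with 0 < g_tr < v and c, B̃ > 0, and set λ = 0. Then lim_{k→∞} k^{3/2} · E_rel(g_tr, v) = 4 π^{5/2} B̃ c, where E_rel(g_tr, v) := 16π² B̃ c ∫_{g_tr}^{∞} exp(−k(v−g)²) · [(1 − exp(−4kvg))/(4kvg)] · g² dg depends on k. Equivalently, E_rel(g_tr, v) is asymptotic to 4π B̃ c (π/k)^{3/2} as k → ∞ when g_tr < v. -/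
open MeasureTheory Real Filter

noncomputable section

/-- The error bound `E_rel(g_tr, v)` for Maxwell-type collisions (`λ = 0`), as a function of the
width parameter `k`:
`E_rel(g_tr,v) = 16π² B̃ c ∫_{g_tr}^∞ e^{−k(v−g)²} [(1−e^{−4kvg})/(4kvg)] g² dg`. -/
def Erel (Btil c k gtr v : ℝ) : ℝ :=
  16 * π ^ 2 * Btil * c *
    ∫ g in Set.Ioi gtr,
      Real.exp (-k * (v - g) ^ 2) * ((1 - Real.exp (-(4 * k * v * g))) / (4 * k * v * g)) * g ^ 2

-- L1: FTC computation
lemma int_s_exp (k b : ℝ) (hk : 0 < k) :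
    ∫ s in Set.Ioi b, s * Real.exp (-k * s ^ 2) = Real.exp (-k * b ^ 2) / (2 * k) := by
  have hderiv : ∀ x ∈ Set.Ici b, HasDerivAt (fun x : ℝ => -Real.exp (-k * x ^ 2) / (2 * k))
      (x * Real.exp (-k * x ^ 2)) x := by
    intro x _
    have h1 : HasDerivAt (fun x : ℝ => -k * x ^ 2) (-k * (2 * x)) x := by
      simpa using ((hasDerivAt_pow 2 x).const_mul (-k))
    have h2 := (h1.exp).neg.div_const (2 * k)
    refine h2.congr_deriv ?_
    rw [div_eq_iff (by positivity)]
    ring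
  have hint : IntegrableOn (fun s : ℝ => s * Real.exp (-k * s ^ 2)) (Set.Ioi b) :=
    (integrable_mul_exp_neg_mul_sq hk).integrableOn
  have htend : Tendsto (fun x : ℝ => -Real.exp (-k * x ^ 2) / (2 * k)) atTop (nhds 0) := by
    have h3 : Tendsto (fun x : ℝ => -k * x ^ 2) atTop atBot := by
      have h := (tendsto_pow_atTop (two_ne_zero)).const_mul_atTop hk (f := fun x : ℝ => x ^ 2)
      have := tendsto_neg_atBot_iff.mpr h
      simpa [neg_mul] using this
    have h4 := Real.tendsto_exp_atBot.comp h3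
    have := (h4.neg).div_const (2 * k)
    simpa using this
  have := integral_Ioi_of_hasDerivAt_of_tendsto' hderiv hint htend
  rw [this]
  field_simp
  ring


-- L2: tail bound
lemma gauss_tail_bound (k b : ℝ) (hk : 0 < k) (hb : 0 < b) :
    ∫ s in Set.Ioi b, Real.exp (-k * s ^ 2) ≤ Real.exp (-k * b ^ 2) / (2 * k * b) := by
  have h1 : ∫ s in Set.Ioi b, Real.exp (-k * s ^ 2) ≤
      ∫ s in Set.Ioi b, (1 / b) * (s * Real.exp (-k * s ^ 2)) := by
    apply setIntegral_mono_on ((integrable_exp_neg_mul_sq hk).integrableOn)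
      (((integrable_mul_exp_neg_mul_sq hk).const_mul (1 / b)).integrableOn)
      measurableSet_Ioi
    intro x hx
    have hx' : b < x := hx
    have h2 : (1:ℝ) ≤ x / b := (one_le_div hb).mpr hx'.le
    have h3 : 0 < Real.exp (-k * x ^ 2) := Real.exp_pos _
    calc Real.exp (-k * x ^ 2) = 1 * Real.exp (-k * x ^ 2) := by ring
      _ ≤ (x / b) * Real.exp (-k * x ^ 2) := by nlinarith
      _ = 1 / b * (x * Real.exp (-k * x ^ 2)) := by ring
  rw [MeasureTheory.integral_const_mul, int_s_exp k b hk] at h1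
  calc ∫ s in Set.Ioi b, Real.exp (-k * s ^ 2) ≤ 1 / b * (Real.exp (-k * b ^ 2) / (2 * k)) := h1
    _ = Real.exp (-k * b ^ 2) / (2 * k * b) := by field_simp

-- shift lemma
lemma shift_Ioi (f : ℝ → ℝ) (a v : ℝ) :
    ∫ x in Set.Ioi a, f x = ∫ x in Set.Ioi (a - v), f (x + v) := by
  have e : MeasurableEmbedding (fun x : ℝ => x + v) :=
    (Homeomorph.addRight v).isClosedEmbedding.measurableEmbedding
  have h := e.setIntegral_map (μ := volume) f (Set.Ioi a)
  rw [map_add_right_eq_self volume v] at h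
  rw [h]
  congr 1
  ext x
  simp [lt_sub_iff_add_lt]


lemma sqrt_atTop : Tendsto Real.sqrt atTop atTop := by
  have h := tendsto_rpow_atTop (show (0:ℝ) < 1/2 by norm_num)
  apply h.congr'
  filter_upwards [eventually_ge_atTop (0:ℝ)] with x hx
  rw [Real.sqrt_eq_rpow]

lemma tendsto_inv_sqrt : Tendsto (fun k : ℝ => 1 / Real.sqrt k) atTop (nhds 0) := by
  exact (sqrt_atTop.inv_tendsto_atTop).congr (fun k => by simp [one_div])

-- tail with sqrt factor → 0
lemma sqrt_mul_tail_zero (b : ℝ) (hb : 0 < b) :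
    Tendsto (fun k : ℝ => Real.sqrt k * ∫ s in Set.Ioi b, Real.exp (-k * s ^ 2)) atTop (nhds 0) := by
  apply squeeze_zero' (g := fun k => 1 / (2 * b * Real.sqrt k))
  · filter_upwards [eventually_gt_atTop (0:ℝ)] with k hk
    have : 0 ≤ ∫ s in Set.Ioi b, Real.exp (-k * s ^ 2) :=
      setIntegral_nonneg measurableSet_Ioi (fun x _ => (Real.exp_pos _).le)
    positivity
  · filter_upwards [eventually_gt_atTop (0:ℝ)] with k hk
    have h1 := gauss_tail_bound k b hk hb
    have hsk : 0 < Real.sqrt k := Real.sqrt_pos.mpr hk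
    have h2 : Real.exp (-k * b ^ 2) ≤ 1 := by
      apply Real.exp_le_one_iff.mpr; nlinarith
    have h3 : Real.sqrt k * ∫ s in Set.Ioi b, Real.exp (-k * s ^ 2)
        ≤ Real.sqrt k * (1 / (2 * k * b)) := by
      apply mul_le_mul_of_nonneg_left _ hsk.le
      calc _ ≤ Real.exp (-k * b ^ 2) / (2 * k * b) := h1
        _ ≤ 1 / (2 * k * b) := by apply div_le_div_of_nonneg_right h2 (by positivity) |>.trans_eq rfl
    calc _ ≤ Real.sqrt k * (1 / (2 * k * b)) := h3
      _ = 1 / (2 * b * Real.sqrt k) := by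
          rw [eq_div_iff (by positivity)]
          field_simp
          nlinarith [Real.sq_sqrt hk.le, Real.sqrt_nonneg k]
  · have : Tendsto (fun k : ℝ => 2 * b * Real.sqrt k) atTop atTop :=
      sqrt_atTop.const_mul_atTop (by positivity)
    have h2 := this.inv_tendsto_atTop
    apply h2.congr
    intro k
    simp [one_div]


lemma sqrt_mul_gauss_Ioi (a : ℝ) (ha : a < 0) :
    Tendsto (fun k : ℝ => Real.sqrt k * ∫ s in Set.Ioi a, Real.exp (-k * s ^ 2)) atTop
      (nhds (Real.sqrt π)) := by
  have key : ∀ k : ℝ, 0 < k →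
      Real.sqrt k * ∫ s in Set.Ioi a, Real.exp (-k * s ^ 2)
        = Real.sqrt π - Real.sqrt k * ∫ s in Set.Ioi (-a), Real.exp (-k * s ^ 2) := by
    intro k hk
    have hint := integrable_exp_neg_mul_sq hk
    have hsplit := intervalIntegral.integral_Iic_add_Ioi (b := a) hint.integrableOn hint.integrableOn
      (f := fun s : ℝ => Real.exp (-k * s ^ 2)) (μ := volume)
    have hneg : ∫ s in Set.Iic a, Real.exp (-k * s ^ 2)
        = ∫ s in Set.Ioi (-a), Real.exp (-k * s ^ 2) := by
      rw [← integral_comp_neg_Iic]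
      congr 1; ext x; ring_nf
    have hfull : ∫ s : ℝ, Real.exp (-k * s ^ 2) = Real.sqrt (π / k) := integral_gaussian k
    have hsq : Real.sqrt k * Real.sqrt (π / k) = Real.sqrt π := by
      rw [← Real.sqrt_mul hk.le]
      congr 1
      field_simp
    have h1 : ∫ s in Set.Ioi a, Real.exp (-k * s ^ 2)
        = Real.sqrt (π / k) - ∫ s in Set.Ioi (-a), Real.exp (-k * s ^ 2) := by
      rw [← hfull, ← hsplit, hneg]; ring
    rw [h1, mul_sub, hsq]
  have := (tendsto_const_nhds (x := Real.sqrt π) (f := atTop (α := ℝ))).sub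
    (sqrt_mul_tail_zero (-a) (by linarith))
  rw [sub_zero] at this
  apply this.congr'
  filter_upwards [eventually_gt_atTop (0:ℝ)] with k hk
  exact (key k hk).symm


-- integrability helpers
lemma int_shift_sub (k v : ℝ) (hk : 0 < k) :
    Integrable (fun g : ℝ => g * Real.exp (-k * (g - v) ^ 2)) := by
  have hF : Integrable (fun x : ℝ => (x + v) * Real.exp (-k * x ^ 2)) := by
    have h1 := integrable_mul_exp_neg_mul_sq hk
    have h2 := (integrable_exp_neg_mul_sq hk).const_mul v
    have := h1.add h2
    apply this.congr
    filter_upwards with x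
    simp only [Pi.add_apply]
    ring
  have := hF.comp_sub_right v
  apply this.congr
  filter_upwards with x
  simp [sub_add_cancel]

lemma int_shift_add (k v : ℝ) (hk : 0 < k) :
    Integrable (fun g : ℝ => g * Real.exp (-k * (g + v) ^ 2)) := by
  have hF : Integrable (fun x : ℝ => (x - v) * Real.exp (-k * x ^ 2)) := by
    have h1 := integrable_mul_exp_neg_mul_sq hk
    have h2 := (integrable_exp_neg_mul_sq hk).const_mul v
    have := h1.sub h2
    apply this.congr
    filter_upwards with x
    simp only [Pi.sub_apply]
    ring
  have := hF.comp_add_right v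
  apply this.congr
  filter_upwards with x
  simp

-- the main identity
lemma Erel_eq (Btil c k gtr v : ℝ) (hk : 0 < k) (hv : 0 < v) (hgtr : 0 < gtr) :
    Erel Btil c k gtr v = 16 * π ^ 2 * Btil * c * ((1 / (4 * k * v)) *
      ((Real.exp (-k * (gtr - v) ^ 2) / (2 * k) + v * ∫ s in Set.Ioi (gtr - v), Real.exp (-k * s ^ 2))
       - (Real.exp (-k * (gtr + v) ^ 2) / (2 * k) - v * ∫ s in Set.Ioi (gtr + v), Real.exp (-k * s ^ 2)))) := by
  unfold Erel
  congr 1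
  -- step 1: pointwise congruence
  have step1 : ∫ g in Set.Ioi gtr,
      Real.exp (-k * (v - g) ^ 2) * ((1 - Real.exp (-(4 * k * v * g))) / (4 * k * v * g)) * g ^ 2
      = ∫ g in Set.Ioi gtr, (1 / (4 * k * v)) *
          (g * Real.exp (-k * (g - v) ^ 2) - g * Real.exp (-k * (g + v) ^ 2)) := by
    apply setIntegral_congr_fun measurableSet_Ioi
    intro g hg
    have hg0 : 0 < g := hgtr.trans hg
    have hexp : Real.exp (-k * (v - g) ^ 2) * Real.exp (-(4 * k * v * g))
        = Real.exp (-k * (g + v) ^ 2) := by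
      rw [← Real.exp_add]; congr 1; ring
    have hvg : (v - g) ^ 2 = (g - v) ^ 2 := by ring
    have hexp' : Real.exp (-(k * (g + v) ^ 2))
        = Real.exp (-(k * (g - v) ^ 2)) * Real.exp (-(4 * k * v * g)) := by
      rw [← Real.exp_add]; congr 1; ring
    field_simp
    rw [show (v - g) ^ 2 = (g - v) ^ 2 from hvg, hexp']
    ring
  rw [step1, MeasureTheory.integral_const_mul]
  congr 1
  -- step 2: split the subtraction
  rw [integral_sub ((int_shift_sub k v hk).integrableOn) ((int_shift_add k v hk).integrableOn)]
  congr 1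
  · -- ∫_{Ioi gtr} g e^{-k(g-v)²} = e^{-k(gtr-v)²}/(2k) + v ∫_{Ioi (gtr-v)} e^{-ks²}
    rw [shift_Ioi (fun g => g * Real.exp (-k * (g - v) ^ 2)) gtr v]
    have : ∀ x : ℝ, (x + v) * Real.exp (-k * (x + v - v) ^ 2)
        = x * Real.exp (-k * x ^ 2) + v * Real.exp (-k * x ^ 2) := by
      intro x; rw [add_sub_cancel_right]; ring
    rw [setIntegral_congr_fun measurableSet_Ioi (fun x _ => this x)]
    rw [integral_add ((integrable_mul_exp_neg_mul_sq hk).integrableOn)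
      (((integrable_exp_neg_mul_sq hk).const_mul v).integrableOn)]
    rw [int_s_exp _ _ hk, MeasureTheory.integral_const_mul]
  · rw [shift_Ioi (fun g => g * Real.exp (-k * (g + v) ^ 2)) gtr (-v)]
    have : ∀ x : ℝ, (x + -v) * Real.exp (-k * (x + -v + v) ^ 2)
        = x * Real.exp (-k * x ^ 2) - v * Real.exp (-k * x ^ 2) := by
      intro x; rw [neg_add_cancel_right]; ring
    rw [show gtr - -v = gtr + v by ring]
    rw [setIntegral_congr_fun measurableSet_Ioi (fun x _ => this x)]
    rw [integral_sub ((integrable_mul_exp_neg_mul_sq hk).integrableOn)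
      (((integrable_exp_neg_mul_sq hk).const_mul v).integrableOn)]
    rw [int_s_exp _ _ hk, MeasureTheory.integral_const_mul]


lemma exp_div_sqrt_zero (a v : ℝ) (hv : 0 < v) :
    Tendsto (fun k : ℝ => Real.exp (-k * a ^ 2) / (8 * v * Real.sqrt k)) atTop (nhds 0) := by
  apply squeeze_zero' (g := fun k => 1 / (8 * v * Real.sqrt k))
  · filter_upwards [eventually_gt_atTop (0:ℝ)] with k hk
    have := Real.sqrt_pos.mpr hk
    positivity
  · filter_upwards [eventually_gt_atTop (0:ℝ)] with k hk
    have hs := Real.sqrt_pos.mpr hk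
    apply div_le_div_of_nonneg_right _ (by positivity) |>.trans_eq rfl
    exact Real.exp_le_one_iff.mpr (by nlinarith)
  · have : Tendsto (fun k : ℝ => 8 * v * Real.sqrt k) atTop atTop :=
      sqrt_atTop.const_mul_atTop (by positivity)
    have h2 := this.inv_tendsto_atTop
    apply h2.congr
    intro k; simp [one_div]


/-- for `0 < g_tr < v`, `k^{3/2} E_rel(g_tr, v) → 4 π^{5/2} B̃ c` as `k → ∞`;
equivalently `E_rel(g_tr, v) ∼ 4π B̃ c (π/k)^{3/2}`. -/
theorem Erel_asymptotics_interior (c Btil gtr v : ℝ) (hc : 0 < c) (hB : 0 < Btil)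
    (hgtr : 0 < gtr) (hgv : gtr < v) :
    Tendsto (fun k : ℝ => k ^ ((3 : ℝ) / 2) * Erel Btil c k gtr v) atTop
      (nhds (4 * π ^ ((5 : ℝ) / 2) * Btil * c)) := by
  have hv : 0 < v := hgtr.trans hgv
  have ha : gtr - v < 0 := by linarith
  have hb : 0 < gtr + v := by linarith
  -- the limiting combination
  have T1 := exp_div_sqrt_zero (gtr - v) v hv
  have T2 := exp_div_sqrt_zero (gtr + v) v hv
  have T3 := (sqrt_mul_gauss_Ioi (gtr - v) ha).const_mul (1/4 : ℝ)
  have T4 := (sqrt_mul_tail_zero (gtr + v) hb).const_mul (1/4 : ℝ)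
  have Tall := (((T1.sub T2).add T3).add T4).const_mul (16 * π ^ 2 * Btil * c)
  have hlim : 16 * π ^ 2 * Btil * c * (0 - 0 + 1/4 * Real.sqrt π + 1/4 * 0)
      = 4 * π ^ ((5 : ℝ) / 2) * Btil * c := by
    rw [show ((5:ℝ)/2) = (2:ℕ) + (1/2 : ℝ) by norm_num, Real.rpow_add pi_pos,
      Real.rpow_natCast, ← Real.sqrt_eq_rpow]
    ring
  rw [← hlim]
  apply Tall.congr'
  filter_upwards [eventually_gt_atTop (0:ℝ)] with k hk
  have hs := Real.sqrt_pos.mpr hk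
  have hk32 : k ^ ((3:ℝ)/2) = k * Real.sqrt k := by
    rw [show (3:ℝ)/2 = 1 + 1/2 by norm_num, Real.rpow_add hk, Real.rpow_one,
      ← Real.sqrt_eq_rpow]
  have hss : Real.sqrt k * Real.sqrt k = k := Real.mul_self_sqrt hk.le
  rw [Erel_eq Btil c k gtr v hk hv hgtr, hk32]
  generalize (∫ s in Set.Ioi (gtr - v), Real.exp (-k * s ^ 2)) = A
  generalize (∫ s in Set.Ioi (gtr + v), Real.exp (-k * s ^ 2)) = B
  generalize Real.exp (-k * (gtr - v) ^ 2) = E1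
  generalize Real.exp (-k * (gtr + v) ^ 2) = E2
  obtain ⟨s, hs0, rfl⟩ : ∃ s : ℝ, 0 < s ∧ k = s * s := ⟨Real.sqrt k, hs, hss.symm⟩
  rw [Real.sqrt_mul_self hs0.le]
  field_simp
  ring

end
end

section
/- Fix c, B̃, v > 0 and set λ = 0 and g_tr = v. Then lim_{k→∞} k^{3/2} · E_rel(v, v) = 2 π^{5/2} B̃ c, where E_rel(v, v) := 16π² B̃ c ∫_{v}^{∞} exp(−k(v−g)²) · [(1 − exp(−4kvg))/(4kvg)] · g² dg. That is, when the truncation parameter equals the speed, the error bound is asymptotically half of its value in the interior case: E_rel(v, v) ∼ 2π B̃ c (π/k)^{3/2} as k → ∞. -/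
open MeasureTheory Real Filter

noncomputable section

/-- Translation of a set integral over `Ioi`. -/
lemma integral_Ioi_shift (f : ℝ → ℝ) (v : ℝ) :
    ∫ x in Set.Ioi v, f x = ∫ x in Set.Ioi (0 : ℝ), f (x + v) := by
  have h := (measurePreserving_add_right (volume : Measure ℝ) v).setIntegral_preimage_emb
      (measurableEmbedding_addRight v) f (Set.Ioi v)
  rw [← h]
  congr 1
  ext x
  simp

/-- The first moment of the Gaussian on the half line. -/
lemma integral_mul_gaussian_Ioi {k : ℝ} (hk : 0 < k) :
    ∫ x in Set.Ioi (0 : ℝ), x * Real.exp (-k * x ^ 2) = 1 / (2 * k) := by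
  have hd : ∀ x ∈ Set.Ici (0 : ℝ),
      HasDerivAt (fun x : ℝ => -Real.exp (-k * x ^ 2) / (2 * k)) (x * Real.exp (-k * x ^ 2)) x := by
    intro x _
    have h1 : HasDerivAt (fun x : ℝ => -k * x ^ 2) (-k * (2 * x)) x := by
      simpa using (hasDerivAt_pow 2 x).const_mul (-k)
    have h2 := (h1.exp).neg.div_const (2 * k)
    convert h2 using 1
    · rfl
    · rfl
    · rfl
    rw [eq_div_iff (by positivity)]
    ring
  have hint : IntegrableOn (fun x : ℝ => x * Real.exp (-k * x ^ 2)) (Set.Ioi 0) :=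
    (integrable_mul_exp_neg_mul_sq hk).integrableOn
  have ht : Tendsto (fun x : ℝ => -Real.exp (-k * x ^ 2) / (2 * k)) atTop (nhds 0) := by
    have h3 : Tendsto (fun x : ℝ => -k * x ^ 2) atTop atBot := by
      have : Tendsto (fun x : ℝ => x ^ 2) atTop atTop := tendsto_pow_atTop (by norm_num)
      exact (tendsto_neg_atTop_atBot.comp (this.const_mul_atTop hk)).congr (fun x => by simp)
    have := (Real.tendsto_exp_atBot.comp h3).neg.div_const (2 * k)
    simpa using this
  have h := integral_Ioi_of_hasDerivAt_of_tendsto' hd hint ht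
  rw [h]
  field_simp
  simp

/-- The shifted Gaussian integral over `Ioi v`. -/
lemma integral_gaussian_Ioi_shifted (k v : ℝ) :
    ∫ g in Set.Ioi v, Real.exp (-k * (g - v) ^ 2) = Real.sqrt (π / k) / 2 := by
  rw [integral_Ioi_shift]
  simp_rw [add_sub_cancel_right]
  exact integral_gaussian_Ioi k

/-- The shifted first moment integral over `Ioi v`. -/
lemma integral_mul_gaussian_Ioi_shifted {k : ℝ} (hk : 0 < k) (v : ℝ) :
    ∫ g in Set.Ioi v, (g - v) * Real.exp (-k * (g - v) ^ 2) = 1 / (2 * k) := by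
  rw [integral_Ioi_shift]
  simp_rw [add_sub_cancel_right]
  exact integral_mul_gaussian_Ioi hk

/-- Pointwise upper bound for the integrand. -/
lemma integrand_le {v k g : ℝ} (hv : 0 < v) (hk : 0 < k) (hg : v < g) :
    Real.exp (-k * (g - v) ^ 2) *
      ((1 - Real.exp (-(4 * k * v * g))) / (4 * k * v * g)) * g ^ 2 ≤
      Real.exp (-k * (g - v) ^ 2) * (1 / (4 * k)) +
      ((g - v) * Real.exp (-k * (g - v) ^ 2)) * (1 / (4 * k * v)) := by
  have hg0 : 0 < g := hv.trans hg
  have hx : (0 : ℝ) < 4 * k * v * g := by positivity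
  have hrhs : Real.exp (-k * (g - v) ^ 2) * (1 / (4 * k)) +
      ((g - v) * Real.exp (-k * (g - v) ^ 2)) * (1 / (4 * k * v)) =
      Real.exp (-k * (g - v) ^ 2) * (g / (4 * k * v)) := by
    field_simp
    ring
  rw [hrhs, mul_assoc]
  apply mul_le_mul_of_nonneg_left _ (Real.exp_pos _).le
  rw [div_mul_eq_mul_div, div_le_div_iff₀ hx (by positivity)]
  nlinarith [Real.exp_pos (-(4 * k * v * g)), sq_nonneg g,
    mul_nonneg (mul_nonneg (Real.exp_pos (-(4 * k * v * g))).le (sq_nonneg g))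
      (by positivity : (0:ℝ) ≤ 4 * k * v)]

/-- Pointwise nonnegativity of the integrand. -/
lemma integrand_nonneg {v k g : ℝ} (hv : 0 < v) (hk : 0 < k) (hg : v < g) :
    0 ≤ Real.exp (-k * (g - v) ^ 2) *
      ((1 - Real.exp (-(4 * k * v * g))) / (4 * k * v * g)) * g ^ 2 := by
  have hg0 : 0 < g := hv.trans hg
  have hx : (0 : ℝ) < 4 * k * v * g := by positivity
  have hE1 : Real.exp (-(4 * k * v * g)) ≤ 1 := by
    calc Real.exp (-(4 * k * v * g)) ≤ Real.exp 0 := Real.exp_le_exp.mpr (by linarith)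
      _ = 1 := Real.exp_zero
  exact mul_nonneg (mul_nonneg (Real.exp_pos _).le
    (div_nonneg (by linarith) hx.le)) (sq_nonneg g)

/-- Integrability of the integrand on `Ioi v`. -/
lemma integrand_integrableOn {v k : ℝ} (hv : 0 < v) (hk : 0 < k) :
    IntegrableOn (fun g : ℝ => Real.exp (-k * (g - v) ^ 2) *
      ((1 - Real.exp (-(4 * k * v * g))) / (4 * k * v * g)) * g ^ 2) (Set.Ioi v) := by
  have hA : IntegrableOn (fun g : ℝ => Real.exp (-k * (g - v) ^ 2)) (Set.Ioi v) :=
    ((integrable_exp_neg_mul_sq hk).comp_sub_right v).integrableOn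
  have hB : IntegrableOn (fun g : ℝ => (g - v) * Real.exp (-k * (g - v) ^ 2)) (Set.Ioi v) :=
    ((integrable_mul_exp_neg_mul_sq hk).comp_sub_right v).integrableOn
  apply Integrable.mono' ((hA.mul_const (1 / (4 * k))).add (hB.mul_const (1 / (4 * k * v))))
  · apply Measurable.aestronglyMeasurable
    fun_prop
  · rw [ae_restrict_iff' measurableSet_Ioi]
    filter_upwards with g hg
    rw [Real.norm_eq_abs, abs_of_nonneg (integrand_nonneg hv hk hg)]
    exact integrand_le hv hk hg

/-- Lower bound used in the squeeze argument. -/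
lemma lower_bd {v k : ℝ} (hv : 0 < v) (hk : 0 < k) :
    (1 - Real.exp (-(4 * k * v * v))) * (Real.sqrt π / 8) ≤ k ^ ((3 : ℝ) / 2) *
      ∫ g in Set.Ioi v, Real.exp (-k * (g - v) ^ 2) *
        ((1 - Real.exp (-(4 * k * v * g))) / (4 * k * v * g)) * g ^ 2 := by
  have hA : IntegrableOn (fun g : ℝ => Real.exp (-k * (g - v) ^ 2)) (Set.Ioi v) :=
    ((integrable_exp_neg_mul_sq hk).comp_sub_right v).integrableOn
  set c₁ : ℝ := (1 - Real.exp (-(4 * k * v * v))) * (1 / (4 * k)) with hc₁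
  have hIntLow : IntegrableOn (fun g : ℝ => Real.exp (-k * (g - v) ^ 2) * c₁) (Set.Ioi v) :=
    hA.mul_const _
  -- pointwise lower bound
  have hlb : ∀ g ∈ Set.Ioi v, Real.exp (-k * (g - v) ^ 2) * c₁ ≤
      Real.exp (-k * (g - v) ^ 2) *
      ((1 - Real.exp (-(4 * k * v * g))) / (4 * k * v * g)) * g ^ 2 := by
    intro g hg
    rw [Set.mem_Ioi] at hg
    have hg0 : 0 < g := hv.trans hg
    have hx : (0 : ℝ) < 4 * k * v * g := by positivity
    have hE : Real.exp (-(4 * k * v * g)) ≤ Real.exp (-(4 * k * v * v)) :=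
      Real.exp_le_exp.mpr (by nlinarith)
    rw [mul_assoc]
    apply mul_le_mul_of_nonneg_left _ (Real.exp_pos _).le
    rw [hc₁, div_mul_eq_mul_div, le_div_iff₀ hx]
    have h5 : (1 - Real.exp (-(4 * k * v * v))) * (1 / (4 * k)) * (4 * k * v * g) =
        (1 - Real.exp (-(4 * k * v * v))) * (v * g) := by
      field_simp
    rw [h5]
    have hE1 : Real.exp (-(4 * k * v * v)) ≤ 1 := by
      calc Real.exp (-(4 * k * v * v)) ≤ Real.exp 0 := Real.exp_le_exp.mpr (by nlinarith)
        _ = 1 := Real.exp_zero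
    have h6 : (1 - Real.exp (-(4 * k * v * v))) * v ≤ (1 - Real.exp (-(4 * k * v * g))) * g :=
      mul_le_mul (by linarith) hg.le hv.le (by linarith)
    nlinarith [mul_le_mul_of_nonneg_right h6 hg0.le]
  have hle : ∫ g in Set.Ioi v, Real.exp (-k * (g - v) ^ 2) * c₁ ≤
      ∫ g in Set.Ioi v, Real.exp (-k * (g - v) ^ 2) *
        ((1 - Real.exp (-(4 * k * v * g))) / (4 * k * v * g)) * g ^ 2 :=
    setIntegral_mono_on hIntLow (integrand_integrableOn hv hk) measurableSet_Ioi hlb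
  have hval : ∫ g in Set.Ioi v, Real.exp (-k * (g - v) ^ 2) * c₁ =
      Real.sqrt (π / k) / 2 * c₁ := by
    rw [integral_mul_const, integral_gaussian_Ioi_shifted]
  rw [hval] at hle
  have h8 := mul_le_mul_of_nonneg_left hle (Real.rpow_nonneg hk.le ((3 : ℝ) / 2))
  refine le_trans (le_of_eq ?_) h8
  -- algebra: k^{3/2} * (√(π/k)/2 * c₁) = (1 - E₀) * (√π/8)
  rw [hc₁]
  have hs : Real.sqrt (π / k) = Real.sqrt π / Real.sqrt k := Real.sqrt_div pi_pos.le k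
  have hk32 : k ^ ((3 : ℝ) / 2) = k * Real.sqrt k := by
    rw [show ((3 : ℝ) / 2) = 1 + 1 / 2 by norm_num, Real.rpow_add hk, Real.rpow_one,
      ← Real.sqrt_eq_rpow]
  have hkp : 0 < Real.sqrt k := Real.sqrt_pos.mpr hk
  rw [hs, hk32]
  field_simp
  ring

/-- Upper bound used in the squeeze argument. -/
lemma upper_bd {v k : ℝ} (hv : 0 < v) (hk : 0 < k) :
    k ^ ((3 : ℝ) / 2) * ∫ g in Set.Ioi v, Real.exp (-k * (g - v) ^ 2) *
        ((1 - Real.exp (-(4 * k * v * g))) / (4 * k * v * g)) * g ^ 2 ≤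
      Real.sqrt π / 8 + 1 / (8 * v * Real.sqrt k) := by
  have hA : IntegrableOn (fun g : ℝ => Real.exp (-k * (g - v) ^ 2)) (Set.Ioi v) :=
    ((integrable_exp_neg_mul_sq hk).comp_sub_right v).integrableOn
  have hB : IntegrableOn (fun g : ℝ => (g - v) * Real.exp (-k * (g - v) ^ 2)) (Set.Ioi v) :=
    ((integrable_mul_exp_neg_mul_sq hk).comp_sub_right v).integrableOn
  have hle : (∫ g in Set.Ioi v, Real.exp (-k * (g - v) ^ 2) *
      ((1 - Real.exp (-(4 * k * v * g))) / (4 * k * v * g)) * g ^ 2) ≤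
      ∫ g in Set.Ioi v, (Real.exp (-k * (g - v) ^ 2) * (1 / (4 * k)) +
        ((g - v) * Real.exp (-k * (g - v) ^ 2)) * (1 / (4 * k * v))) :=
    setIntegral_mono_on (integrand_integrableOn hv hk)
      ((hA.mul_const _).add (hB.mul_const _)) measurableSet_Ioi
      (fun g hg => integrand_le hv hk hg)
  have hval : (∫ g in Set.Ioi v, (Real.exp (-k * (g - v) ^ 2) * (1 / (4 * k)) +
      ((g - v) * Real.exp (-k * (g - v) ^ 2)) * (1 / (4 * k * v)))) =
      Real.sqrt (π / k) / 2 * (1 / (4 * k)) + 1 / (2 * k) * (1 / (4 * k * v)) := by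
    rw [integral_add (hA.mul_const _) (hB.mul_const _), integral_mul_const, integral_mul_const,
      integral_gaussian_Ioi_shifted, integral_mul_gaussian_Ioi_shifted hk]
  rw [hval] at hle
  have h8 := mul_le_mul_of_nonneg_left hle (Real.rpow_nonneg hk.le ((3 : ℝ) / 2))
  refine le_trans h8 (le_of_eq ?_)
  have hs : Real.sqrt (π / k) = Real.sqrt π / Real.sqrt k := Real.sqrt_div pi_pos.le k
  have hk32 : k ^ ((3 : ℝ) / 2) = k * Real.sqrt k := by
    rw [show ((3 : ℝ) / 2) = 1 + 1 / 2 by norm_num, Real.rpow_add hk, Real.rpow_one,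
      ← Real.sqrt_eq_rpow]
  have hss : Real.sqrt k * Real.sqrt k = k := Real.mul_self_sqrt hk.le
  have hkp : 0 < Real.sqrt k := Real.sqrt_pos.mpr hk
  rw [hs, hk32]
  field_simp
  ring_nf
  linear_combination 8 * hss

/-- The key asymptotics of the inner integral. -/
lemma key_tendsto (v : ℝ) (hv : 0 < v) :
    Tendsto (fun k : ℝ => k ^ ((3 : ℝ) / 2) *
      ∫ g in Set.Ioi v, Real.exp (-k * (g - v) ^ 2) *
        ((1 - Real.exp (-(4 * k * v * g))) / (4 * k * v * g)) * g ^ 2) atTop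
      (nhds (Real.sqrt π / 8)) := by
  apply tendsto_of_tendsto_of_tendsto_of_le_of_le'
    (g := fun k : ℝ => (1 - Real.exp (-(4 * k * v * v))) * (Real.sqrt π / 8))
    (h := fun k : ℝ => Real.sqrt π / 8 + 1 / (8 * v * Real.sqrt k))
  · -- lower comparison function tends to √π/8
    have h1 : Tendsto (fun k : ℝ => Real.exp (-(4 * k * v * v))) atTop (nhds 0) := by
      apply Real.tendsto_exp_atBot.comp
      have h2 : Tendsto (fun k : ℝ => 4 * v * v * k) atTop atTop :=
        Tendsto.const_mul_atTop (by positivity) tendsto_id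
      have h3 := tendsto_neg_atTop_atBot.comp h2
      exact h3.congr (fun k => by simp; ring)
    have := ((tendsto_const_nhds (x := (1 : ℝ))).sub h1).mul_const (Real.sqrt π / 8)
    simpa using this
  · -- upper comparison function tends to √π/8
    have h2 : Tendsto (fun k : ℝ => 1 / (8 * v * Real.sqrt k)) atTop (nhds 0) := by
      have hsq : Tendsto Real.sqrt atTop atTop := by
        have := tendsto_rpow_atTop (y := (1 / 2 : ℝ)) (by norm_num)
        exact this.congr' (by filter_upwards [eventually_ge_atTop (0:ℝ)] with x _ using
          (Real.sqrt_eq_rpow x).symm)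
      have h3 : Tendsto (fun k : ℝ => 8 * v * Real.sqrt k) atTop atTop :=
        Tendsto.const_mul_atTop (by positivity) hsq
      have h4 := h3.inv_tendsto_atTop
      exact h4.congr fun k => (one_div _).symm
    simpa using (tendsto_const_nhds (x := Real.sqrt π / 8)).add h2
  · -- lower bound
    filter_upwards [eventually_gt_atTop (0 : ℝ)] with k hk
    exact lower_bd hv hk
  · -- upper bound
    filter_upwards [eventually_gt_atTop (0 : ℝ)] with k hk
    exact upper_bd hv hk

/-- at the boundary case `g_tr = v > 0`,
`k^{3/2} E_rel(v, v) → 2 π^{5/2} B̃ c` as `k → ∞`; i.e. `E_rel(v,v) ∼ 2π B̃ c (π/k)^{3/2}`,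
half of the interior-case value. -/
theorem Erel_asymptotics_boundary (c Btil v : ℝ) (hc : 0 < c) (hB : 0 < Btil) (hv : 0 < v) :
    Tendsto (fun k : ℝ => k ^ ((3 : ℝ) / 2) * Erel Btil c k v v) atTop
      (nhds (2 * π ^ ((5 : ℝ) / 2) * Btil * c)) := by
  have key := key_tendsto v hv
  have hconst := key.const_mul (16 * π ^ 2 * Btil * c)
  have heq : (16 * π ^ 2 * Btil * c) * (Real.sqrt π / 8) = 2 * π ^ ((5 : ℝ) / 2) * Btil * c := by
    have h1 : π ^ ((5 : ℝ) / 2) = π ^ (2 : ℝ) * π ^ ((1 : ℝ) / 2) := by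
      rw [← Real.rpow_add pi_pos]; norm_num
    have h2 : π ^ (2 : ℝ) = π ^ (2 : ℕ) := by
      rw [← Real.rpow_natCast π 2]; norm_num
    have h3 : π ^ ((1 : ℝ) / 2) = Real.sqrt π := (Real.sqrt_eq_rpow π).symm
    rw [h1, h2, h3]
    ring
  rw [← heq]
  refine hconst.congr (fun k => ?_)
  unfold Erel
  have hsq : ∀ g : ℝ, -k * (v - g) ^ 2 = -k * (g - v) ^ 2 := fun g => by ring
  simp_rw [hsq]
  ring

end
end

section
/- For all c, k, B̃ > 0 and all 0 < v < g_tr, with λ = 0, the non-asymptotic bound E_rel(g_tr, v) ≤ 2π² B̃ c g_tr exp(−k(g_tr − v)²) / (k² v (g_tr − v)) holds, where E_rel(g_tr, v) := 16π² B̃ c ∫_{g_tr}^{∞} exp(−k(v−g)²) · [(1 − exp(−4kvg))/(4kvg)] · g² dg. -/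
open MeasureTheory Real Filter

noncomputable section

/-- for all `c, k, B̃ > 0` and `0 < v < g_tr`, the non-asymptotic bound
`E_rel(g_tr, v) ≤ 2π² B̃ c g_tr e^{−k(g_tr − v)²} / (k² v (g_tr − v))` holds. -/
theorem Erel_nonasymptotic_bound (c k Btil v gtr : ℝ) (hc : 0 < c) (hk : 0 < k) (hB : 0 < Btil)
    (hv : 0 < v) (hvg : v < gtr) :
    Erel Btil c k gtr v ≤
      2 * π ^ 2 * Btil * c * gtr * Real.exp (-k * (gtr - v) ^ 2) / (k ^ 2 * v * (gtr - v)) := by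
  have ha0 : 0 < gtr - v := sub_pos.mpr hvg
  have hgtr : 0 < gtr := hv.trans hvg
  set C : ℝ := gtr / (4 * k * v * (gtr - v)) with hC
  have hC0 : 0 < C := by positivity
  -- the dominating function
  set h : ℝ → ℝ := fun g => C * ((g - v) * Real.exp (-k * (g - v) ^ 2)) with hh
  -- FTC piece: derivative of F g = -exp(-k(g-v)^2)/(2k)
  have hF : ∀ x ∈ Set.Ici gtr,
      HasDerivAt (fun g => -Real.exp (-k * (g - v) ^ 2) / (2 * k))
        ((x - v) * Real.exp (-k * (x - v) ^ 2)) x := by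
    intro x _
    have h1 : HasDerivAt (fun g : ℝ => -k * (g - v) ^ 2) (-k * (2 * (x - v))) x := by
      have := ((hasDerivAt_id x).sub_const v).pow 2
      simpa using (this.const_mul (-k))
    have h2 := (h1.exp).neg.div_const (2 * k)
    refine h2.congr_deriv ?_
    rw [div_eq_iff (by positivity)]
    ring
  have hpos : ∀ x ∈ Set.Ioi gtr, 0 ≤ (x - v) * Real.exp (-k * (x - v) ^ 2) := by
    intro x hx
    have : 0 ≤ x - v := by simp at hx; linarith
    positivity
  have hlim : Tendsto (fun g => -Real.exp (-k * (g - v) ^ 2) / (2 * k)) atTop (nhds 0) := by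
    have h1 : Tendsto (fun g : ℝ => -k * (g - v) ^ 2) atTop atBot := by
      have h2 : Tendsto (fun g : ℝ => (g - v) ^ 2) atTop atTop :=
        (tendsto_pow_atTop two_ne_zero).comp (tendsto_atTop_add_const_right _ (-v) tendsto_id)
      exact h2.const_mul_atTop_of_neg (by linarith)
    have h3 : Tendsto (fun g : ℝ => Real.exp (-k * (g - v) ^ 2)) atTop (nhds 0) :=
      Real.tendsto_exp_atBot.comp h1
    have := (h3.neg).div_const (2 * k)
    simpa using this
  have hint : IntegrableOn (fun x => (x - v) * Real.exp (-k * (x - v) ^ 2)) (Set.Ioi gtr) :=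
    integrableOn_Ioi_deriv_of_nonneg' hF hpos hlim
  have hval : ∫ x in Set.Ioi gtr, (x - v) * Real.exp (-k * (x - v) ^ 2)
      = Real.exp (-k * (gtr - v) ^ 2) / (2 * k) := by
    have := integral_Ioi_of_hasDerivAt_of_nonneg' hF hpos hlim
    rw [this]; ring
  -- integral comparison
  set f : ℝ → ℝ := fun g =>
    Real.exp (-k * (v - g) ^ 2) * ((1 - Real.exp (-(4 * k * v * g))) / (4 * k * v * g)) * g ^ 2
    with hf
  have hmono : ∫ g in Set.Ioi gtr, f g ≤ ∫ g in Set.Ioi gtr, h g := by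
    apply integral_mono_of_nonneg
    · filter_upwards [ae_restrict_mem measurableSet_Ioi] with g hg
      have hg' : gtr < g := hg
      have hg0 : 0 < g := hgtr.trans hg'
      have hY : 0 < 4 * k * v * g := by positivity
      have : Real.exp (-(4 * k * v * g)) ≤ 1 := Real.exp_le_one_iff.mpr (by linarith)
      have h1 : 0 ≤ (1 - Real.exp (-(4 * k * v * g))) / (4 * k * v * g) :=
        div_nonneg (by linarith) hY.le
      exact mul_nonneg (mul_nonneg (Real.exp_pos _).le h1) (sq_nonneg g)
    · exact (hint.const_mul C)
    · filter_upwards [ae_restrict_mem measurableSet_Ioi] with g hg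
      have hg' : gtr < g := hg
      have hg0 : 0 < g := hgtr.trans hg'
      have hY : 0 < 4 * k * v * g := by positivity
      have hE : Real.exp (-(4 * k * v * g)) ≤ 1 := Real.exp_le_one_iff.mpr (by linarith)
      have hEpos : 0 < Real.exp (-(4 * k * v * g)) := Real.exp_pos _
      have hsq : (v - g) ^ 2 = (g - v) ^ 2 := by ring
      have step1 : f g ≤ Real.exp (-k * (g - v) ^ 2) * g / (4 * k * v) := by
        rw [hf]; simp only []
        rw [hsq]
        have h1 : (1 - Real.exp (-(4 * k * v * g))) / (4 * k * v * g) ≤ 1 / (4 * k * v * g) := by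
          gcongr
          linarith [hEpos.le]
        calc Real.exp (-k * (g - v) ^ 2) * ((1 - Real.exp (-(4 * k * v * g))) / (4 * k * v * g)) * g ^ 2
            ≤ Real.exp (-k * (g - v) ^ 2) * (1 / (4 * k * v * g)) * g ^ 2 := by
              apply mul_le_mul_of_nonneg_right (mul_le_mul_of_nonneg_left h1 (Real.exp_pos _).le)
              positivity
          _ = Real.exp (-k * (g - v) ^ 2) * g / (4 * k * v) := by
              field_simp
      have step2 : Real.exp (-k * (g - v) ^ 2) * g / (4 * k * v) ≤ h g := by
        rw [hh, hC]
        have hgle : g ≤ (g - v) * gtr / (gtr - v) := by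
          rw [le_div_iff₀ ha0]
          nlinarith
        calc Real.exp (-k * (g - v) ^ 2) * g / (4 * k * v)
            ≤ Real.exp (-k * (g - v) ^ 2) * ((g - v) * gtr / (gtr - v)) / (4 * k * v) := by
              gcongr
          _ = gtr / (4 * k * v * (gtr - v)) * ((g - v) * Real.exp (-k * (g - v) ^ 2)) := by
              field_simp
      exact step1.trans step2
  have hhval : ∫ g in Set.Ioi gtr, h g = C * (Real.exp (-k * (gtr - v) ^ 2) / (2 * k)) := by
    rw [hh]
    rw [MeasureTheory.integral_const_mul, hval]
  rw [Erel]
  calc 16 * π ^ 2 * Btil * c * ∫ g in Set.Ioi gtr, f g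
      ≤ 16 * π ^ 2 * Btil * c * ∫ g in Set.Ioi gtr, h g := by
        apply mul_le_mul_of_nonneg_left hmono (by positivity)
    _ = 2 * π ^ 2 * Btil * c * gtr * Real.exp (-k * (gtr - v) ^ 2) / (k ^ 2 * v * (gtr - v)) := by
        rw [hhval, hC]
        field_simp
        ring

end
end

section
/- Suppose f : ℝ³ → ℝ is measurable, nonnegative, and satisfies f(v) ≤ c·exp(−k|v|²) for all v ∈ ℝ³, where c, k > 0. For v ∈ ℝ³ and g_tr > 0, define E₁(v) := ∫_{|g| ≥ g_tr} ∫_{S²} f(v + (g − |g|Θ)/2) f(v + (g + |g|Θ)/2) |g|^λ dΘ dg and E₂(v) := ∫_{|g| ≥ g_tr} ∫_{S²} f(v) f(v+g) |g|^λ dΘ dg. Then both E₁(v) and E₂(v) are finite and nonnegative, Q(f,f)(v) − Q^tr(f,f)(v) = B̃·(E₁(v) − E₂(v)), and consequently |Q(f,f)(v) − Q^tr(f,f)(v)| ≤ B̃ · max{E₁(v), E₂(v)}. -/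
open MeasureTheory Real Metric Filter
open scoped RealInnerProductSpace

noncomputable section

/-- Velocity space `ℝ³`. -/
abbrev V3 : Type := EuclideanSpace ℝ (Fin 3)

/-- The surface measure on the unit sphere `S² ⊂ ℝ³` (total mass `4π`). -/
def sphereMeasure : Measure (sphere (0 : V3) 1) := (volume : Measure V3).toSphere

lemma gauss_integrable {a : ℝ} (ha : 0 < a) :
    Integrable (fun g : V3 => Real.exp (-a * ‖g‖ ^ 2)) := by
  have h := (GaussianFourier.integrable_cexp_neg_mul_sq_norm_add (V := V3) (b := (a : ℂ))
    (by simpa using ha) 0 0).re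
  refine h.congr (Filter.Eventually.of_forall fun g => ?_)
  have : -(a:ℂ) * (‖g‖:ℂ) ^ 2 + 0 * (inner ℝ (0:V3) g : ℝ) = ((-a * ‖g‖ ^ 2 : ℝ) : ℂ) := by
    push_cast; ring
  simp only [this, ← Complex.ofReal_exp]
  exact Complex.ofReal_re _

lemma gauss_rpow_integrable {a lam : ℝ} (ha : 0 < a) (hlam0 : 0 ≤ lam) (hlam1 : lam ≤ 1) :
    Integrable (fun g : V3 => Real.exp (-a * ‖g‖ ^ 2) * ‖g‖ ^ lam) := by
  refine ((gauss_integrable (a := a / 2) (by positivity)).const_mul (1 + 2 / a)).mono'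
    ?_ (Filter.Eventually.of_forall fun g => ?_)
  · exact ((Real.continuous_exp.comp (by continuity)).mul
      ((Real.continuous_rpow_const hlam0).comp continuous_norm)).aestronglyMeasurable
  · set x := ‖g‖ with hx
    have hx0 : 0 ≤ x := norm_nonneg g
    have h1 : x ^ lam ≤ 1 + x ^ 2 := by
      rcases le_or_gt x 1 with h | h
      · have := Real.rpow_le_one hx0 h hlam0
        nlinarith
      · have h2 : x ^ lam ≤ x ^ (1:ℝ) := Real.rpow_le_rpow_of_exponent_le h.le hlam1
        rw [Real.rpow_one] at h2
        nlinarith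
    have he : Real.exp (-a * x ^ 2) = Real.exp (-(a/2) * x ^ 2) * Real.exp (-(a/2) * x ^ 2) := by
      rw [← Real.exp_add]; ring_nf
    have he1 : 0 < Real.exp (-(a/2) * x ^ 2) := Real.exp_pos _
    have he2 : Real.exp (-(a/2) * x ^ 2) ≤ 1 := Real.exp_le_one_iff.mpr (by nlinarith)
    have hu : (a/2) * x ^ 2 ≤ Real.exp ((a/2) * x ^ 2) := by
      have := Real.add_one_le_exp ((a/2) * x ^ 2); linarith
    have hprod : Real.exp (-(a/2) * x ^ 2) * Real.exp ((a/2) * x ^ 2) = 1 := by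
      rw [← Real.exp_add]; ring_nf; exact Real.exp_zero
    have h3 : x ^ 2 * Real.exp (-(a/2) * x ^ 2) ≤ 2 / a := by
      have h4 : x ^ 2 ≤ (2/a) * Real.exp ((a/2) * x ^ 2) := by
        rw [div_mul_eq_mul_div, le_div_iff₀ ha]; nlinarith
      calc x ^ 2 * Real.exp (-(a/2) * x ^ 2)
          ≤ (2/a) * Real.exp ((a/2) * x ^ 2) * Real.exp (-(a/2) * x ^ 2) :=
            mul_le_mul_of_nonneg_right h4 he1.le
        _ = 2 / a := by rw [mul_assoc, mul_comm (Real.exp _), hprod, mul_one]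
    have hb : 0 ≤ x ^ lam := Real.rpow_nonneg hx0 lam
    have : Real.exp (-a * x ^ 2) * x ^ lam
        ≤ Real.exp (-(a/2) * x ^ 2) * (1 + 2 / a) := by
      rw [he, mul_assoc]
      refine mul_le_mul_of_nonneg_left ?_ he1.le
      calc Real.exp (-(a/2) * x ^ 2) * x ^ lam
          ≤ Real.exp (-(a/2) * x ^ 2) * (1 + x ^ 2) := mul_le_mul_of_nonneg_left h1 he1.le
        _ = Real.exp (-(a/2) * x ^ 2) + x ^ 2 * Real.exp (-(a/2) * x ^ 2) := by ring
        _ ≤ 1 + 2 / a := add_le_add he2 h3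
    rw [Real.norm_eq_abs, abs_of_nonneg (by positivity)]
    linarith [this]



/-- The Boltzmann collision operator with isotropic kernel `B(g,χ) = B̃ ‖g‖^λ`:
`Q(f,f)(v) = ∫_{g ∈ ℝ³} ∫_{Θ ∈ S²} [f(v′)f(w′) − f(v)f(v+g)] B̃‖g‖^λ dΘ dg`,
with post-collisional velocities `v′ = v + (g − ‖g‖Θ)/2`, `w′ = v + (g + ‖g‖Θ)/2`. -/
def Qop (Btil lam : ℝ) (f : V3 → ℝ) (v : V3) : ℝ :=
  ∫ g : V3, ∫ Θ : sphere (0 : V3) 1,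
    (f (v + (1 / 2 : ℝ) • (g - ‖g‖ • (Θ : V3))) * f (v + (1 / 2 : ℝ) • (g + ‖g‖ • (Θ : V3)))
        - f v * f (v + g)) * (Btil * ‖g‖ ^ lam) ∂sphereMeasure

/-- The truncated Boltzmann collision operator: the same integral with the `g`-integration
restricted to the ball `{g : ‖g‖ ≤ g_tr}`. -/
def Qtr (Btil lam gtr : ℝ) (f : V3 → ℝ) (v : V3) : ℝ :=
  ∫ g in closedBall (0 : V3) gtr, ∫ Θ : sphere (0 : V3) 1,
    (f (v + (1 / 2 : ℝ) • (g - ‖g‖ • (Θ : V3))) * f (v + (1 / 2 : ℝ) • (g + ‖g‖ • (Θ : V3)))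
        - f v * f (v + g)) * (Btil * ‖g‖ ^ lam) ∂sphereMeasure

/-- The gain-term tail `E₁(v) = ∫_{‖g‖ ≥ g_tr} ∫_{S²} f(v′) f(w′) ‖g‖^λ dΘ dg`. -/
def Eone (lam gtr : ℝ) (f : V3 → ℝ) (v : V3) : ℝ :=
  ∫ g in {g : V3 | gtr ≤ ‖g‖}, ∫ Θ : sphere (0 : V3) 1,
    f (v + (1 / 2 : ℝ) • (g - ‖g‖ • (Θ : V3))) * f (v + (1 / 2 : ℝ) • (g + ‖g‖ • (Θ : V3))) *
      ‖g‖ ^ lam ∂sphereMeasure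

/-- The loss-term tail `E₂(v) = ∫_{‖g‖ ≥ g_tr} ∫_{S²} f(v) f(v+g) ‖g‖^λ dΘ dg`. -/
def Etwo (lam gtr : ℝ) (f : V3 → ℝ) (v : V3) : ℝ :=
  ∫ g in {g : V3 | gtr ≤ ‖g‖}, ∫ Θ : sphere (0 : V3) 1,
    f v * f (v + g) * ‖g‖ ^ lam ∂sphereMeasure

set_option maxHeartbeats 8000000 in
/-- for `0 ≤ f ≤ c e^{−k|·|²}` measurable, the tails `E₁(v)` and `E₂(v)` are finite
(i.e. the inner integrals are integrable over `{‖g‖ ≥ g_tr}`) and nonnegative,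
`Q(f,f)(v) − Q^tr(f,f)(v) = B̃ (E₁(v) − E₂(v))`, and consequently
`|Q(f,f)(v) − Q^tr(f,f)(v)| ≤ B̃ max{E₁(v), E₂(v)}`. -/
theorem truncation_error_split (c k Btil lam : ℝ) (hc : 0 < c) (hk : 0 < k) (hB : 0 < Btil)
    (hlam0 : 0 ≤ lam) (hlam1 : lam ≤ 1) (f : V3 → ℝ) (hf_meas : Measurable f)
    (hf_nonneg : ∀ v, 0 ≤ f v) (hf_bound : ∀ v : V3, f v ≤ c * Real.exp (-k * ‖v‖ ^ 2))
    (gtr : ℝ) (hgtr : 0 < gtr) (v : V3) :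
    IntegrableOn
        (fun g : V3 => ∫ Θ : sphere (0 : V3) 1,
          f (v + (1 / 2 : ℝ) • (g - ‖g‖ • (Θ : V3))) *
            f (v + (1 / 2 : ℝ) • (g + ‖g‖ • (Θ : V3))) * ‖g‖ ^ lam ∂sphereMeasure)
        {g : V3 | gtr ≤ ‖g‖} volume ∧
      IntegrableOn
        (fun g : V3 => ∫ Θ : sphere (0 : V3) 1,
          f v * f (v + g) * ‖g‖ ^ lam ∂sphereMeasure)
        {g : V3 | gtr ≤ ‖g‖} volume ∧
      0 ≤ Eone lam gtr f v ∧ 0 ≤ Etwo lam gtr f v ∧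
      Qop Btil lam f v - Qtr Btil lam gtr f v = Btil * (Eone lam gtr f v - Etwo lam gtr f v) ∧
      |Qop Btil lam f v - Qtr Btil lam gtr f v| ≤
        Btil * max (Eone lam gtr f v) (Etwo lam gtr f v) := by
  haveI hfin : IsFiniteMeasure sphereMeasure := by unfold sphereMeasure; infer_instance
  obtain ⟨M, hMdef⟩ : ∃ M : ℝ, M = c ^ 2 * Real.exp (k * ‖v‖ ^ 2) := ⟨_, rfl⟩
  have hM0 : 0 < M := by rw [hMdef]; positivity
  have hexpv : (1:ℝ) ≤ Real.exp (k * ‖v‖ ^ 2) := Real.one_le_exp (by positivity)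
  have hfc : ∀ u : V3, f u ≤ c := by
    intro u
    have h1 : Real.exp (-k * ‖u‖ ^ 2) ≤ 1 := Real.exp_le_one_iff.mpr (by nlinarith [sq_nonneg ‖u‖])
    nlinarith [hf_bound u]
  -- gain bound
  have gain_bound : ∀ (g : V3) (Θ : sphere (0:V3) 1),
      f (v + (1 / 2 : ℝ) • (g - ‖g‖ • (Θ : V3))) * f (v + (1 / 2 : ℝ) • (g + ‖g‖ • (Θ : V3)))
        ≤ M * Real.exp (-(k/2) * ‖g‖ ^ 2) := by
    intro g Θ
    set w1 : V3 := v + (1 / 2 : ℝ) • (g - ‖g‖ • (Θ : V3)) with hw1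
    set w2 : V3 := v + (1 / 2 : ℝ) • (g + ‖g‖ • (Θ : V3)) with hw2
    have hΘ : ‖(Θ : V3)‖ = 1 := by
      have := Θ.2; rwa [mem_sphere_zero_iff_norm] at this
    have hsub : w2 - w1 = ‖g‖ • (Θ : V3) := by rw [hw1, hw2]; module
    have hnorm : ‖w2 - w1‖ = ‖g‖ := by
      rw [hsub, norm_smul, hΘ, mul_one, Real.norm_eq_abs, abs_norm]
    have hineq : ‖g‖ ^ 2 ≤ 2 * (‖w1‖ ^ 2 + ‖w2‖ ^ 2) := by
      have h := norm_sub_le w2 w1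
      rw [hnorm] at h
      nlinarith [norm_nonneg w1, norm_nonneg w2, sq_nonneg (‖w1‖ - ‖w2‖), norm_nonneg g,
        mul_self_le_mul_self (norm_nonneg g) h]
    have h1 : f w1 * f w2 ≤ (c * Real.exp (-k * ‖w1‖ ^ 2)) * (c * Real.exp (-k * ‖w2‖ ^ 2)) :=
      mul_le_mul (hf_bound w1) (hf_bound w2) (hf_nonneg w2) (by positivity)
    have h2 : (c * Real.exp (-k * ‖w1‖ ^ 2)) * (c * Real.exp (-k * ‖w2‖ ^ 2))
        = c ^ 2 * Real.exp (-k * ‖w1‖ ^ 2 + -k * ‖w2‖ ^ 2) := by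
      rw [Real.exp_add]; ring
    have h3 : Real.exp (-k * ‖w1‖ ^ 2 + -k * ‖w2‖ ^ 2) ≤ Real.exp (-(k/2) * ‖g‖ ^ 2) :=
      Real.exp_le_exp.mpr (by nlinarith)
    calc f w1 * f w2 ≤ c ^ 2 * Real.exp (-k * ‖w1‖ ^ 2 + -k * ‖w2‖ ^ 2) := by rw [← h2]; exact h1
      _ ≤ c ^ 2 * Real.exp (-(k/2) * ‖g‖ ^ 2) := mul_le_mul_of_nonneg_left h3 (by positivity)
      _ ≤ M * Real.exp (-(k/2) * ‖g‖ ^ 2) := by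
          refine mul_le_mul_of_nonneg_right ?_ (Real.exp_pos _).le
          rw [hMdef]; nlinarith
  have loss_bound : ∀ g : V3, f v * f (v + g) ≤ M * Real.exp (-(k/2) * ‖g‖ ^ 2) := by
    intro g
    have hng : ‖g‖ ^ 2 ≤ 2 * ‖v + g‖ ^ 2 + 2 * ‖v‖ ^ 2 := by
      have h : ‖g‖ ≤ ‖v + g‖ + ‖v‖ := by
        calc ‖g‖ = ‖(v + g) - v‖ := by rw [add_sub_cancel_left]
          _ ≤ ‖v + g‖ + ‖v‖ := norm_sub_le _ _
      nlinarith [norm_nonneg g, norm_nonneg (v+g), norm_nonneg v, sq_nonneg (‖v+g‖ - ‖v‖),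
        mul_self_le_mul_self (norm_nonneg g) h]
    have h1 : f v * f (v + g) ≤ c * (c * Real.exp (-k * ‖v + g‖ ^ 2)) :=
      mul_le_mul (hfc v) (hf_bound (v+g)) (hf_nonneg (v+g)) hc.le
    have h2 : Real.exp (-k * ‖v + g‖ ^ 2) ≤ Real.exp (k * ‖v‖ ^ 2) * Real.exp (-(k/2) * ‖g‖ ^ 2) := by
      rw [← Real.exp_add]
      exact Real.exp_le_exp.mpr (by nlinarith)
    calc f v * f (v + g) ≤ c * (c * Real.exp (-k * ‖v + g‖ ^ 2)) := h1
      _ = c ^ 2 * Real.exp (-k * ‖v + g‖ ^ 2) := by ring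
      _ ≤ c ^ 2 * (Real.exp (k * ‖v‖ ^ 2) * Real.exp (-(k/2) * ‖g‖ ^ 2)) :=
          mul_le_mul_of_nonneg_left h2 (by positivity)
      _ = M * Real.exp (-(k/2) * ‖g‖ ^ 2) := by rw [hMdef]; ring
  -- measurability
  haveI hsfin : SFinite sphereMeasure := inferInstance
  have hcont1 : Continuous (fun p : V3 × sphere (0:V3) 1 =>
      v + (1 / 2 : ℝ) • (p.1 - ‖p.1‖ • (p.2 : V3))) :=
    by fun_prop
  have hcont2 : Continuous (fun p : V3 × sphere (0:V3) 1 =>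
      v + (1 / 2 : ℝ) • (p.1 + ‖p.1‖ • (p.2 : V3))) :=
    by fun_prop
  have hrpow : Measurable (fun g : V3 => ‖g‖ ^ lam) :=
    ((Real.continuous_rpow_const hlam0).comp continuous_norm).measurable
  have hmeas_gain : Measurable (fun p : V3 × sphere (0:V3) 1 =>
      f (v + (1 / 2 : ℝ) • (p.1 - ‖p.1‖ • (p.2 : V3))) *
        f (v + (1 / 2 : ℝ) • (p.1 + ‖p.1‖ • (p.2 : V3))) * ‖p.1‖ ^ lam) :=
    ((hf_meas.comp hcont1.measurable).mul (hf_meas.comp hcont2.measurable)).mul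
      (hrpow.comp measurable_fst)
  have hmeas_loss : Measurable (fun p : V3 × sphere (0:V3) 1 =>
      f v * f (v + p.1) * ‖p.1‖ ^ lam) :=
    ((measurable_const.mul (hf_meas.comp (measurable_const.add measurable_fst)))).mul
      (hrpow.comp measurable_fst)
  have hmeas_full : Measurable (fun p : V3 × sphere (0:V3) 1 =>
      (f (v + (1 / 2 : ℝ) • (p.1 - ‖p.1‖ • (p.2 : V3))) *
          f (v + (1 / 2 : ℝ) • (p.1 + ‖p.1‖ • (p.2 : V3))) - f v * f (v + p.1)) *
        (Btil * ‖p.1‖ ^ lam)) :=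
    (((hf_meas.comp hcont1.measurable).mul (hf_meas.comp hcont2.measurable)).sub
        (measurable_const.mul (hf_meas.comp (measurable_const.add measurable_fst)))).mul
      (measurable_const.mul (hrpow.comp measurable_fst))
  have hsm1 : StronglyMeasurable (fun g : V3 => ∫ Θ : sphere (0 : V3) 1,
      f (v + (1 / 2 : ℝ) • (g - ‖g‖ • (Θ : V3))) * f (v + (1 / 2 : ℝ) • (g + ‖g‖ • (Θ : V3))) *
        ‖g‖ ^ lam ∂sphereMeasure) :=
    hmeas_gain.stronglyMeasurable.integral_prod_right'
  have hsm2 : StronglyMeasurable (fun g : V3 => ∫ _Θ : sphere (0 : V3) 1,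
      f v * f (v + g) * ‖g‖ ^ lam ∂sphereMeasure) :=
    hmeas_loss.stronglyMeasurable.integral_prod_right'
  have hsmF : StronglyMeasurable (fun g : V3 => ∫ Θ : sphere (0 : V3) 1,
      (f (v + (1 / 2 : ℝ) • (g - ‖g‖ • (Θ : V3))) * f (v + (1 / 2 : ℝ) • (g + ‖g‖ • (Θ : V3)))
          - f v * f (v + g)) * (Btil * ‖g‖ ^ lam) ∂sphereMeasure) :=
    hmeas_full.stronglyMeasurable.integral_prod_right'
  -- uniform bounds for the inner integrals
  obtain ⟨CS, hCSdef⟩ : ∃ CS : ℝ, CS = (sphereMeasure Set.univ).toReal := ⟨_, rfl⟩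
  have hCS0 : 0 ≤ CS := hCSdef ▸ ENNReal.toReal_nonneg
  have hrpow_nn : ∀ g : V3, 0 ≤ ‖g‖ ^ lam := fun g => Real.rpow_nonneg (norm_nonneg g) lam
  have hb1 : ∀ g : V3, ‖∫ Θ : sphere (0 : V3) 1,
      f (v + (1 / 2 : ℝ) • (g - ‖g‖ • (Θ : V3))) * f (v + (1 / 2 : ℝ) • (g + ‖g‖ • (Θ : V3))) *
        ‖g‖ ^ lam ∂sphereMeasure‖
      ≤ (CS * M) * (Real.exp (-(k/2) * ‖g‖ ^ 2) * ‖g‖ ^ lam) := by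
    intro g
    have h := norm_integral_le_of_norm_le_const (μ := sphereMeasure)
      (C := M * Real.exp (-(k/2) * ‖g‖ ^ 2) * ‖g‖ ^ lam)
      (f := fun Θ : sphere (0 : V3) 1 =>
        f (v + (1 / 2 : ℝ) • (g - ‖g‖ • (Θ : V3))) * f (v + (1 / 2 : ℝ) • (g + ‖g‖ • (Θ : V3))) *
          ‖g‖ ^ lam)
      (Filter.Eventually.of_forall fun Θ => by
        rw [Real.norm_eq_abs, abs_of_nonneg
          (mul_nonneg (mul_nonneg (hf_nonneg _) (hf_nonneg _)) (hrpow_nn g))]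
        exact mul_le_mul_of_nonneg_right (gain_bound g Θ) (hrpow_nn g))
    calc _ ≤ M * Real.exp (-(k/2) * ‖g‖ ^ 2) * ‖g‖ ^ lam * (sphereMeasure Set.univ).toReal := h
      _ = (CS * M) * (Real.exp (-(k/2) * ‖g‖ ^ 2) * ‖g‖ ^ lam) := by rw [← hCSdef]; ring
  have hb2 : ∀ g : V3, ‖∫ _Θ : sphere (0 : V3) 1,
      f v * f (v + g) * ‖g‖ ^ lam ∂sphereMeasure‖
      ≤ (CS * M) * (Real.exp (-(k/2) * ‖g‖ ^ 2) * ‖g‖ ^ lam) := by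
    intro g
    have h := norm_integral_le_of_norm_le_const (μ := sphereMeasure)
      (C := M * Real.exp (-(k/2) * ‖g‖ ^ 2) * ‖g‖ ^ lam)
      (f := fun _Θ : sphere (0 : V3) 1 => f v * f (v + g) * ‖g‖ ^ lam)
      (Filter.Eventually.of_forall fun Θ => by
        rw [Real.norm_eq_abs, abs_of_nonneg
          (mul_nonneg (mul_nonneg (hf_nonneg _) (hf_nonneg _)) (hrpow_nn g))]
        exact mul_le_mul_of_nonneg_right (loss_bound g) (hrpow_nn g))
    calc _ ≤ M * Real.exp (-(k/2) * ‖g‖ ^ 2) * ‖g‖ ^ lam * (sphereMeasure Set.univ).toReal := h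
      _ = (CS * M) * (Real.exp (-(k/2) * ‖g‖ ^ 2) * ‖g‖ ^ lam) := by rw [← hCSdef]; ring
  have hbF : ∀ g : V3, ‖∫ Θ : sphere (0 : V3) 1,
      (f (v + (1 / 2 : ℝ) • (g - ‖g‖ • (Θ : V3))) * f (v + (1 / 2 : ℝ) • (g + ‖g‖ • (Θ : V3)))
          - f v * f (v + g)) * (Btil * ‖g‖ ^ lam) ∂sphereMeasure‖
      ≤ (CS * M * Btil) * (Real.exp (-(k/2) * ‖g‖ ^ 2) * ‖g‖ ^ lam) := by
    intro g
    have h := norm_integral_le_of_norm_le_const (μ := sphereMeasure)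
      (C := M * Real.exp (-(k/2) * ‖g‖ ^ 2) * (Btil * ‖g‖ ^ lam))
      (f := fun Θ : sphere (0 : V3) 1 =>
        (f (v + (1 / 2 : ℝ) • (g - ‖g‖ • (Θ : V3))) * f (v + (1 / 2 : ℝ) • (g + ‖g‖ • (Θ : V3)))
            - f v * f (v + g)) * (Btil * ‖g‖ ^ lam))
      (Filter.Eventually.of_forall fun Θ => by
        rw [Real.norm_eq_abs, abs_mul, abs_of_nonneg (show (0:ℝ) ≤ Btil * ‖g‖ ^ lam by positivity)]
        refine mul_le_mul_of_nonneg_right ?_ (by positivity)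
        rw [abs_sub_le_iff]
        constructor
        · have h2 : 0 ≤ f v * f (v + g) := mul_nonneg (hf_nonneg v) (hf_nonneg (v + g))
          linarith [gain_bound g Θ]
        · have h2 : 0 ≤ f (v + (1 / 2 : ℝ) • (g - ‖g‖ • (Θ : V3))) *
              f (v + (1 / 2 : ℝ) • (g + ‖g‖ • (Θ : V3))) :=
            mul_nonneg (hf_nonneg _) (hf_nonneg _)
          linarith [loss_bound g])
    calc _ ≤ M * Real.exp (-(k/2) * ‖g‖ ^ 2) * (Btil * ‖g‖ ^ lam) *
          (sphereMeasure Set.univ).toReal := h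
      _ = (CS * M * Btil) * (Real.exp (-(k/2) * ‖g‖ ^ 2) * ‖g‖ ^ lam) := by rw [← hCSdef]; ring
  -- the dominating Gaussian
  have hD : Integrable (fun g : V3 => Real.exp (-(k/2) * ‖g‖ ^ 2) * ‖g‖ ^ lam) :=
    gauss_rpow_integrable (by positivity) hlam0 hlam1
  have hInt1 : Integrable (fun g : V3 => ∫ Θ : sphere (0 : V3) 1,
      f (v + (1 / 2 : ℝ) • (g - ‖g‖ • (Θ : V3))) * f (v + (1 / 2 : ℝ) • (g + ‖g‖ • (Θ : V3))) *
        ‖g‖ ^ lam ∂sphereMeasure) :=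
    (hD.const_mul (CS * M)).mono' hsm1.aestronglyMeasurable (Filter.Eventually.of_forall hb1)
  have hInt2 : Integrable (fun g : V3 => ∫ _Θ : sphere (0 : V3) 1,
      f v * f (v + g) * ‖g‖ ^ lam ∂sphereMeasure) :=
    (hD.const_mul (CS * M)).mono' hsm2.aestronglyMeasurable (Filter.Eventually.of_forall hb2)
  have hIntF : Integrable (fun g : V3 => ∫ Θ : sphere (0 : V3) 1,
      (f (v + (1 / 2 : ℝ) • (g - ‖g‖ • (Θ : V3))) * f (v + (1 / 2 : ℝ) • (g + ‖g‖ • (Θ : V3)))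
          - f v * f (v + g)) * (Btil * ‖g‖ ^ lam) ∂sphereMeasure) :=
    (hD.const_mul (CS * M * Btil)).mono' hsmF.aestronglyMeasurable
      (Filter.Eventually.of_forall hbF)
  -- per-g integrability over the sphere
  have hgainTh : ∀ g : V3, Integrable (fun Θ : sphere (0 : V3) 1 =>
      f (v + (1 / 2 : ℝ) • (g - ‖g‖ • (Θ : V3))) * f (v + (1 / 2 : ℝ) • (g + ‖g‖ • (Θ : V3))) *
        ‖g‖ ^ lam) sphereMeasure := by
    intro g
    have hm : Measurable (fun Θ : sphere (0 : V3) 1 =>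
        f (v + (1 / 2 : ℝ) • (g - ‖g‖ • (Θ : V3))) * f (v + (1 / 2 : ℝ) • (g + ‖g‖ • (Θ : V3))) *
          ‖g‖ ^ lam) := hmeas_gain.comp (measurable_prodMk_left (x := g))
    refine (integrable_const (M * Real.exp (-(k/2) * ‖g‖ ^ 2) * ‖g‖ ^ lam)).mono'
      hm.aestronglyMeasurable (Filter.Eventually.of_forall fun Θ => ?_)
    rw [Real.norm_eq_abs, abs_of_nonneg
      (mul_nonneg (mul_nonneg (hf_nonneg _) (hf_nonneg _)) (hrpow_nn g))]
    exact mul_le_mul_of_nonneg_right (gain_bound g Θ) (hrpow_nn g)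
  -- splitting the inner integral for each g
  have hinner : ∀ g : V3, (∫ Θ : sphere (0 : V3) 1,
      (f (v + (1 / 2 : ℝ) • (g - ‖g‖ • (Θ : V3))) * f (v + (1 / 2 : ℝ) • (g + ‖g‖ • (Θ : V3)))
          - f v * f (v + g)) * (Btil * ‖g‖ ^ lam) ∂sphereMeasure)
      = Btil * ((∫ Θ : sphere (0 : V3) 1,
          f (v + (1 / 2 : ℝ) • (g - ‖g‖ • (Θ : V3))) * f (v + (1 / 2 : ℝ) • (g + ‖g‖ • (Θ : V3))) *
            ‖g‖ ^ lam ∂sphereMeasure)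
        - (∫ _Θ : sphere (0 : V3) 1, f v * f (v + g) * ‖g‖ ^ lam ∂sphereMeasure)) := by
    intro g
    have hfun : (fun Θ : sphere (0 : V3) 1 =>
        (f (v + (1 / 2 : ℝ) • (g - ‖g‖ • (Θ : V3))) * f (v + (1 / 2 : ℝ) • (g + ‖g‖ • (Θ : V3)))
            - f v * f (v + g)) * (Btil * ‖g‖ ^ lam))
        = fun Θ : sphere (0 : V3) 1 => Btil *
          (f (v + (1 / 2 : ℝ) • (g - ‖g‖ • (Θ : V3))) * f (v + (1 / 2 : ℝ) • (g + ‖g‖ • (Θ : V3))) *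
            ‖g‖ ^ lam - f v * f (v + g) * ‖g‖ ^ lam) := by
      funext Θ; ring
    rw [hfun, integral_const_mul, integral_sub (hgainTh g) (integrable_const _)]
  -- measurable tail set
  have hTmeas : MeasurableSet {g : V3 | gtr ≤ ‖g‖} := measurableSet_le measurable_const measurable_norm
  -- nonnegativity
  have hE1 : 0 ≤ Eone lam gtr f v := by
    refine setIntegral_nonneg hTmeas fun g _ => integral_nonneg fun Θ => ?_
    exact mul_nonneg (mul_nonneg (hf_nonneg _) (hf_nonneg _)) (hrpow_nn g)
  have hE2 : 0 ≤ Etwo lam gtr f v := by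
    refine setIntegral_nonneg hTmeas fun g _ => integral_nonneg fun Θ => ?_
    exact mul_nonneg (mul_nonneg (hf_nonneg _) (hf_nonneg _)) (hrpow_nn g)
  -- the tail set is a.e. the complement of the closed ball
  have hae : ((closedBall (0 : V3) gtr)ᶜ : Set V3) =ᵐ[volume] {g : V3 | gtr ≤ ‖g‖} := by
    have hsph : (volume : Measure V3) (sphere (0 : V3) gtr) = 0 :=
      Measure.addHaar_sphere _ (0 : V3) gtr
    rw [MeasureTheory.ae_eq_set]
    constructor
    · refine measure_mono_null ?_ (measure_empty (μ := (volume : Measure V3)))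
      intro g hg
      rcases hg with ⟨hg1, hg2⟩
      exact absurd (le_of_lt (by simpa [mem_closedBall, dist_zero_right, not_le] using hg1)) hg2
    · refine measure_mono_null ?_ hsph
      intro g hg
      rcases hg with ⟨hg1, hg2⟩
      have h1 : ‖g‖ ≤ gtr := by simpa [mem_closedBall, dist_zero_right] using hg2
      have h2 : gtr ≤ ‖g‖ := hg1
      simp [mem_sphere_iff_norm, le_antisymm h1 h2]
  -- main identity
  have hQdiff : Qop Btil lam f v - Qtr Btil lam gtr f v
      = Btil * (Eone lam gtr f v - Etwo lam gtr f v) := by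
    have hsplit := integral_add_compl (measurableSet_closedBall
      (x := (0 : V3)) (ε := gtr)) hIntF
    have hQ : Qop Btil lam f v - Qtr Btil lam gtr f v
        = ∫ g in ((closedBall (0 : V3) gtr)ᶜ : Set V3), ∫ Θ : sphere (0 : V3) 1,
            (f (v + (1 / 2 : ℝ) • (g - ‖g‖ • (Θ : V3))) *
                f (v + (1 / 2 : ℝ) • (g + ‖g‖ • (Θ : V3))) - f v * f (v + g)) *
              (Btil * ‖g‖ ^ lam) ∂sphereMeasure ∂volume := by
      rw [Qop, Qtr]; linarith [hsplit]
    rw [hQ, setIntegral_congr_set hae]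
    have hcongr : ∫ g in {g : V3 | gtr ≤ ‖g‖}, (∫ Θ : sphere (0 : V3) 1,
        (f (v + (1 / 2 : ℝ) • (g - ‖g‖ • (Θ : V3))) * f (v + (1 / 2 : ℝ) • (g + ‖g‖ • (Θ : V3)))
            - f v * f (v + g)) * (Btil * ‖g‖ ^ lam) ∂sphereMeasure) ∂volume
        = ∫ g in {g : V3 | gtr ≤ ‖g‖}, Btil * ((∫ Θ : sphere (0 : V3) 1,
            f (v + (1 / 2 : ℝ) • (g - ‖g‖ • (Θ : V3))) *
              f (v + (1 / 2 : ℝ) • (g + ‖g‖ • (Θ : V3))) * ‖g‖ ^ lam ∂sphereMeasure)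
          - (∫ _Θ : sphere (0 : V3) 1, f v * f (v + g) * ‖g‖ ^ lam ∂sphereMeasure)) ∂volume := by
      exact setIntegral_congr_fun hTmeas fun g _ => hinner g
    rw [hcongr, integral_const_mul, integral_sub hInt1.integrableOn hInt2.integrableOn]
    rfl
  refine ⟨hInt1.integrableOn, hInt2.integrableOn, hE1, hE2, hQdiff, ?_⟩
  rw [hQdiff, abs_mul, abs_of_pos hB]
  refine mul_le_mul_of_nonneg_left ?_ hB.le
  rw [abs_sub_le_iff]
  exact ⟨by linarith [le_max_left (Eone lam gtr f v) (Etwo lam gtr f v)],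
    by linarith [le_max_right (Eone lam gtr f v) (Etwo lam gtr f v)]⟩

end
end

section
/- Let R > 0, X > 0, and a ∈ ℝ³ with Y := |a| > 0 and X ≠ Y. Then ∫_{|g| ≤ R} exp(i⟨a,g⟩) · sin(|g|X)/(|g|X) dg = (2π/(p q X Y)) · [ q sin(R p) − p sin(R q) ], where p = X − Y and q = X + Y. -/
open MeasureTheory Real Metric
open scoped RealInnerProductSpace

noncomputable section

lemma aux_sinc_bound (y : ℝ) : |Real.sin y / y| ≤ 1 := by
  rcases eq_or_ne y 0 with h | h
  · simp [h]
  · rw [abs_div, div_le_one (abs_pos.2 h)]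
    exact Real.abs_sin_le_abs

lemma aux_exp_integral (R c : ℝ) (hc : c ≠ 0) :
    (∫ t in (-R)..R, Complex.exp ((Complex.I * c) * t)) = ((2 * Real.sin (c * R) / c : ℝ) : ℂ) := by
  have hc' : (Complex.I * c) ≠ 0 := by
    simp [Complex.I_ne_zero, Complex.ofReal_eq_zero, hc]
  rw [integral_exp_mul_complex hc']
  rw [show ((2 * Real.sin (c * R) / c : ℝ) : ℂ) = 2 * Complex.sin ((c:ℂ)*(R:ℂ)) / (c:ℂ) by
    rw [← Complex.ofReal_mul, ← Complex.ofReal_sin]; push_cast; ring]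
  rw [Complex.sin]
  rw [show Complex.I * (c:ℂ) * ((R:ℝ):ℂ) = ((c:ℂ)*(R:ℂ))*Complex.I by ring,
      show Complex.I * (c:ℂ) * ((-R:ℝ):ℂ) = -((c:ℂ)*(R:ℂ)*Complex.I) by push_cast; ring]
  have hcc : (c:ℂ) ≠ 0 := Complex.ofReal_ne_zero.2 hc
  field_simp
  ring_nf
  linear_combination (Complex.exp ((c:ℂ)*(R:ℂ)*Complex.I) - Complex.exp (-((c:ℂ)*(R:ℂ)*Complex.I))) * Complex.I_sq

lemma aux_radial (X t ρ R : ℝ) (hX : 0 < X) (ht : t ≠ 0) (hρ : 0 ≤ ρ)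
    (hsum : t^2 + ρ^2 = R^2) (hR0 : 0 < R) :
    (∫ r in (0:ℝ)..ρ, r * (Real.sin (Real.sqrt (t^2+r^2) * X) / (Real.sqrt (t^2+r^2) * X)))
      = (Real.cos (t*X) - Real.cos (R*X)) / X^2 := by
  have hpos : ∀ r : ℝ, 0 < t^2 + r^2 := fun r => by positivity
  have hsq : ∀ r : ℝ, 0 < Real.sqrt (t^2+r^2) := fun r => Real.sqrt_pos.2 (hpos r)
  set F : ℝ → ℝ := fun r => -Real.cos (Real.sqrt (t^2+r^2) * X) / X^2 with hF
  have hderiv : ∀ r ∈ Set.uIcc (0:ℝ) ρ, HasDerivAt F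
      (r * (Real.sin (Real.sqrt (t^2+r^2) * X) / (Real.sqrt (t^2+r^2) * X))) r := by
    intro r _
    have h1 : HasDerivAt (fun r : ℝ => t^2 + r^2) (2*r) r := by
      simpa using (hasDerivAt_pow 2 r).const_add (t^2)
    have h2 : HasDerivAt (fun r : ℝ => Real.sqrt (t^2+r^2)) (1/(2*Real.sqrt (t^2+r^2)) * (2*r)) r :=
      (Real.hasDerivAt_sqrt (hpos r).ne').comp r h1
    have h3 : HasDerivAt (fun r : ℝ => Real.sqrt (t^2+r^2) * X)
        ((1/(2*Real.sqrt (t^2+r^2)) * (2*r)) * X) r := h2.mul_const X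
    have h4 : HasDerivAt (fun r : ℝ => -Real.cos (Real.sqrt (t^2+r^2) * X) / X^2)
        (-(-Real.sin (Real.sqrt (t^2+r^2) * X) * ((1/(2*Real.sqrt (t^2+r^2)) * (2*r)) * X)) / X^2)
        r := (((Real.hasDerivAt_cos _).comp r h3).neg).div_const (X^2)
    convert h4 using 1
    field_simp
  have hcont : Continuous fun r : ℝ => r * (Real.sin (Real.sqrt (t^2+r^2) * X) / (Real.sqrt (t^2+r^2) * X)) := by
    apply continuous_id.mul
    apply Continuous.div
    · exact Real.continuous_sin.comp ((Real.continuous_sqrt.comp (by fun_prop)).mul continuous_const)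
    · exact (Real.continuous_sqrt.comp (by fun_prop)).mul continuous_const
    · exact fun r => (mul_pos (hsq r) hX).ne'
  rw [intervalIntegral.integral_eq_sub_of_hasDerivAt hderiv (hcont.intervalIntegrable 0 ρ)]
  have e1 : Real.sqrt (t^2 + ρ^2) = R := by
    rw [hsum]; exact Real.sqrt_sq hR0.le
  have e2 : Real.sqrt (t^2 + 0^2) = |t| := by
    simp [Real.sqrt_sq_eq_abs]
  rw [hF]
  simp only [e1, e2]
  rw [show |t| * X = |t * X| * 1 by rw [abs_mul, abs_of_pos hX]; ring, mul_one, Real.cos_abs]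
  ring

lemma aux_slice (R X Y t : ℝ) (hR : 0 < R) (hX : 0 < X) (ht : t ≠ 0) (htR : |t| < R) :
    (∫ y : ℝ × ℝ, (if t^2 + (y.1^2 + y.2^2) ≤ R^2 then
        Complex.exp (Complex.I * ((Y*t : ℝ) : ℂ)) *
          ((Real.sin (Real.sqrt (t^2+(y.1^2+y.2^2)) * X) /
            (Real.sqrt (t^2+(y.1^2+y.2^2)) * X) : ℝ) : ℂ)
      else 0))
    = Complex.exp (Complex.I * ((Y*t : ℝ) : ℂ)) *
        ((2*π*(Real.cos (t*X) - Real.cos (R*X))/X^2 : ℝ) : ℂ) := by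
  set E : ℂ := Complex.exp (Complex.I * ((Y*t : ℝ) : ℂ)) with hE
  set c : ℝ → ℂ := fun w => if t^2 + w ≤ R^2 then
      E * ((Real.sin (Real.sqrt (t^2+w) * X) / (Real.sqrt (t^2+w) * X) : ℝ) : ℂ) else 0 with hc
  have step1 : (∫ y : ℝ × ℝ, c (y.1^2 + y.2^2))
      = ∫ p in polarCoord.target, p.1 • c ((polarCoord.symm p).1^2 + (polarCoord.symm p).2^2) :=
    (integral_comp_polarCoord_symm (fun y => c (y.1^2+y.2^2))).symm
  have hsymm : ∀ p : ℝ × ℝ, (polarCoord.symm p).1^2 + (polarCoord.symm p).2^2 = p.1^2 := by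
    intro p
    show (p.1 * Real.cos p.2)^2 + (p.1 * Real.sin p.2)^2 = p.1^2
    nlinarith [Real.sin_sq_add_cos_sq p.2]
  show (∫ y : ℝ × ℝ, c (y.1^2 + y.2^2)) = _
  rw [step1]
  simp only [hsymm]
  have htarget : polarCoord.target = Set.Ioi (0:ℝ) ×ˢ Set.Ioo (-π) π := rfl
  rw [htarget]
  have : ∀ p : ℝ × ℝ, p.1 • c (p.1^2) = ((p.1 : ℂ) * c (p.1^2)) * (fun _ : ℝ => (1:ℂ)) p.2 := by
    intro p; simp [Complex.real_smul]
  simp only [this]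
  rw [Measure.volume_eq_prod, MeasureTheory.setIntegral_prod_mul (fun r : ℝ => (r:ℂ) * c (r^2)) (fun _ : ℝ => (1:ℂ))]
  have h1 : (∫ _ in Set.Ioo (-π) π, (1:ℂ)) = ((2*π : ℝ) : ℂ) := by
    simp only [MeasureTheory.setIntegral_const, Real.volume_Ioo, sub_neg_eq_add,
      ENNReal.toReal_ofReal (by positivity : (0:ℝ) ≤ π + π), Complex.real_smul, mul_one]
    rw [Real.volume_real_Ioo_of_le (by linarith [pi_pos])]
    push_cast; ring
  rw [h1]
  -- now the radial integral
  set ρ : ℝ := Real.sqrt (R^2 - t^2) with hρdef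
  have ht2 : t^2 < R^2 := by nlinarith [abs_nonneg t, sq_abs t]
  have hρ0 : 0 ≤ ρ := Real.sqrt_nonneg _
  have hsum : t^2 + ρ^2 = R^2 := by
    rw [hρdef, Real.sq_sqrt (by linarith)]; ring
  have hcond : ∀ r : ℝ, (t^2 + r^2 ≤ R^2 ↔ r ∈ Set.Icc (-ρ) ρ) := by
    intro r
    constructor
    · intro h
      have hr2 : r^2 ≤ ρ^2 := by nlinarith
      constructor <;> nlinarith
    · rintro ⟨h1, h2⟩; nlinarith
  have hind : (fun r : ℝ => (r:ℂ) * c (r^2)) = fun r : ℝ =>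
      Set.indicator (Set.Icc (-ρ) ρ) (fun r : ℝ => (r:ℂ) * (E *
        ((Real.sin (Real.sqrt (t^2+r^2) * X) / (Real.sqrt (t^2+r^2) * X) : ℝ) : ℂ))) r := by
    funext r
    have hcr : c (r^2) = if t^2 + r^2 ≤ R^2 then
        E * ((Real.sin (Real.sqrt (t^2+r^2) * X) / (Real.sqrt (t^2+r^2) * X) : ℝ) : ℂ) else 0 := rfl
    rw [hcr, Set.indicator_apply]
    by_cases h : t^2 + r^2 ≤ R^2
    · rw [if_pos h, if_pos ((hcond r).1 h)]
    · rw [if_neg h, if_neg (fun hm => h ((hcond r).2 hm)), mul_zero]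
  rw [hind, MeasureTheory.setIntegral_indicator measurableSet_Icc]
  have hset : Set.Ioi (0:ℝ) ∩ Set.Icc (-ρ) ρ = Set.Ioc 0 ρ := by
    ext r
    simp only [Set.mem_inter_iff, Set.mem_Ioi, Set.mem_Icc, Set.mem_Ioc]
    constructor
    · rintro ⟨h1, _, h3⟩; exact ⟨h1, h3⟩
    · rintro ⟨h1, h2⟩; exact ⟨h1, by linarith, h2⟩
  rw [hset, ← intervalIntegral.integral_of_le hρ0]
  have hpt : ∀ r : ℝ, (r:ℂ) * (E *
      ((Real.sin (Real.sqrt (t^2+r^2) * X) / (Real.sqrt (t^2+r^2) * X) : ℝ) : ℂ))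
      = E * (((r * (Real.sin (Real.sqrt (t^2+r^2) * X) / (Real.sqrt (t^2+r^2) * X)) : ℝ)) : ℂ) := by
    intro r; push_cast; ring
  simp only [hpt]
  rw [intervalIntegral.integral_const_mul, intervalIntegral.integral_ofReal,
    aux_radial X t ρ R hX ht hρ0 hsum hR]
  push_cast
  ring

lemma aux_outer (R X Y : ℝ) (hR : 0 < R) (hX : 0 < X) (hY : 0 < Y) (hXY : X ≠ Y) :
    (∫ t : ℝ, Set.indicator (Set.Ioo (-R) R) (fun t => Complex.exp (Complex.I * ((Y*t : ℝ):ℂ)) *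
        ((2*π*(Real.cos (t*X) - Real.cos (R*X))/X^2 : ℝ) : ℂ)) t)
    = ((2 * π / ((X - Y) * (X + Y) * X * Y) *
          ((X + Y) * Real.sin (R * (X - Y)) - (X - Y) * Real.sin (R * (X + Y))) : ℝ) : ℂ) := by
  rw [MeasureTheory.integral_indicator measurableSet_Ioo,
    ← MeasureTheory.integral_Ioc_eq_integral_Ioo,
    ← intervalIntegral.integral_of_le (by linarith : -R ≤ R)]
  have hpt : ∀ t : ℝ, Complex.exp (Complex.I * ((Y*t : ℝ):ℂ)) *
      ((2*π*(Real.cos (t*X) - Real.cos (R*X))/X^2 : ℝ) : ℂ)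
      = ((π/X^2 : ℝ):ℂ) * Complex.exp ((Complex.I * ((Y+X : ℝ):ℂ)) * t)
        + ((π/X^2 : ℝ):ℂ) * Complex.exp ((Complex.I * ((Y-X : ℝ):ℂ)) * t)
        - ((2*π*Real.cos (R*X)/X^2 : ℝ):ℂ) * Complex.exp ((Complex.I * ((Y : ℝ):ℂ)) * t) := by
    intro t
    have e0 : ((2*π*(Real.cos (t*X) - Real.cos (R*X))/X^2 : ℝ) : ℂ)
        = ((2*π/X^2 : ℝ):ℂ) * (((Real.cos (t*X) : ℝ):ℂ) - ((Real.cos (R*X) : ℝ):ℂ)) := by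
      push_cast; ring
    have hcos : ((Real.cos (t*X) : ℝ):ℂ) =
        (Complex.exp (Complex.I * (X:ℂ) * (t:ℂ)) + Complex.exp (-(Complex.I * (X:ℂ) * (t:ℂ)))) / 2 := by
      rw [Complex.ofReal_cos, Complex.cos]
      congr 2
      · push_cast; ring
      · push_cast; ring
    rw [e0, hcos,
      show Complex.exp (Complex.I * ((Y*t : ℝ):ℂ)) = Complex.exp (Complex.I * (Y:ℂ) * (t:ℂ)) by
        congr 1; push_cast; ring,
      show Complex.exp ((Complex.I * ((Y+X : ℝ):ℂ)) * t)
          = Complex.exp (Complex.I * (Y:ℂ) * (t:ℂ)) * Complex.exp (Complex.I * (X:ℂ) * (t:ℂ)) by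
        rw [← Complex.exp_add]; congr 1; push_cast; ring,
      show Complex.exp ((Complex.I * ((Y-X : ℝ):ℂ)) * t)
          = Complex.exp (Complex.I * (Y:ℂ) * (t:ℂ)) * Complex.exp (-(Complex.I * (X:ℂ) * (t:ℂ))) by
        rw [← Complex.exp_add]; congr 1; push_cast; ring,
      show Complex.exp ((Complex.I * ((Y : ℝ):ℂ)) * t) = Complex.exp (Complex.I * (Y:ℂ) * (t:ℂ)) from rfl]
    push_cast
    ring
  simp only [hpt]
  have hi : ∀ c : ℝ, IntervalIntegrable (fun t : ℝ => Complex.exp ((Complex.I * (c:ℂ)) * t))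
      volume (-R) R := fun c =>
    (Complex.continuous_exp.comp (by fun_prop : Continuous fun t : ℝ => (Complex.I * (c:ℂ)) * t)).intervalIntegrable _ _
  rw [intervalIntegral.integral_sub (((hi (Y+X)).const_mul _).add ((hi (Y-X)).const_mul _))
      ((hi Y).const_mul _),
    intervalIntegral.integral_add ((hi (Y+X)).const_mul _) ((hi (Y-X)).const_mul _),
    intervalIntegral.integral_const_mul, intervalIntegral.integral_const_mul,
    intervalIntegral.integral_const_mul,
    aux_exp_integral R (Y+X) (by positivity : (0:ℝ) < Y+X).ne',
    aux_exp_integral R (Y-X) (fun h => hXY (by linarith : X = Y)),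
    aux_exp_integral R Y hY.ne']
  rw [← Complex.ofReal_mul, ← Complex.ofReal_mul, ← Complex.ofReal_mul,
    ← Complex.ofReal_add, ← Complex.ofReal_sub, Complex.ofReal_inj]
  rw [show (Y+X)*R = R*(X+Y) by ring, show (Y-X)*R = -(R*(X-Y)) by ring, Real.sin_neg,
    show Y*R = R*Y by ring]
  have key : Real.cos (R*X) * Real.sin (R*Y) = (Real.sin (R*(X+Y)) - Real.sin (R*(X-Y)))/2 := by
    rw [show R*(X+Y) = R*X + R*Y by ring, show R*(X-Y) = R*X - R*Y by ring,
      Real.sin_add, Real.sin_sub]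
    ring
  rw [show 2*π*Real.cos (R*X)/X^2 * (2*Real.sin (R*Y)/Y)
      = 4*π*(Real.cos (R*X)*Real.sin (R*Y))/(X^2*Y) by ring, key]
  have hp : X - Y ≠ 0 := sub_ne_zero.2 hXY
  have hq : X + Y ≠ 0 := by positivity
  have hp' : Y - X ≠ 0 := fun h => hXY (by linarith)
  field_simp
  ring

set_option maxHeartbeats 1000000 in
/-- the term `Ĝ₁` in Haack's closed form of the truncated convolution weighting
function: for `R > 0`, `X > 0`, and `a ∈ ℝ³` with `Y := ‖a‖ > 0`, `X ≠ Y`,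
`∫_{‖g‖ ≤ R} e^{i⟨a,g⟩} sin(‖g‖X)/(‖g‖X) dg = (2π/(pqXY)) [q sin(Rp) − p sin(Rq)]`,
where `p = X − Y` and `q = X + Y`. -/
theorem ball_sinc_fourier_transform (R X : ℝ) (hR : 0 < R) (hX : 0 < X)
    (a : V3) (ha : 0 < ‖a‖) (hXY : X ≠ ‖a‖) :
    (∫ g in closedBall (0 : V3) R,
        Complex.exp (Complex.I * ((⟪a, g⟫ : ℝ) : ℂ)) *
          ((Real.sin (‖g‖ * X) / (‖g‖ * X) : ℝ) : ℂ)) =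
      ((2 * π / ((X - ‖a‖) * (X + ‖a‖) * X * ‖a‖) *
          ((X + ‖a‖) * Real.sin (R * (X - ‖a‖)) -
            (X - ‖a‖) * Real.sin (R * (X + ‖a‖))) : ℝ) : ℂ) := by
  set Y : ℝ := ‖a‖ with hYdef
  -- the rotated target vector
  set b : V3 := EuclideanSpace.single (0 : Fin 3) Y with hbdef
  have hab : ‖a‖ = ‖b‖ := by
    rw [hbdef, EuclideanSpace.norm_single, Real.norm_eq_abs, abs_of_pos ha]
  set L : V3 ≃ₗᵢ[ℝ] V3 := Submodule.reflection (ℝ ∙ (a - b))ᗮ with hLdef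
  have hLa : L a = b := Submodule.reflection_sub hab
  have hLsa : L.symm a = b := by
    rw [hLdef, Submodule.reflection_symm]; exact hLa
  -- step 1: rotate
  have hpre : (⇑L) ⁻¹' (closedBall (0:V3) R) = closedBall 0 R := by
    ext g
    simp [mem_closedBall_zero_iff, L.norm_map]
  have step1 : (∫ g in closedBall (0 : V3) R,
        Complex.exp (Complex.I * ((⟪a, g⟫ : ℝ) : ℂ)) *
          ((Real.sin (‖g‖ * X) / (‖g‖ * X) : ℝ) : ℂ))
      = ∫ g in closedBall (0 : V3) R,
          Complex.exp (Complex.I * ((Y * g 0 : ℝ) : ℂ)) *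
            ((Real.sin (‖g‖ * X) / (‖g‖ * X) : ℝ) : ℂ) := by
    rw [← (L.measurePreserving).setIntegral_preimage_emb
      (L.toHomeomorph.measurableEmbedding)
      (fun g => Complex.exp (Complex.I * ((⟪a, g⟫ : ℝ) : ℂ)) *
        ((Real.sin (‖g‖ * X) / (‖g‖ * X) : ℝ) : ℂ)) (closedBall 0 R), hpre]
    apply setIntegral_congr_fun measurableSet_closedBall
    intro g _
    have h1 : ⟪a, L g⟫ = Y * g 0 := by
      calc ⟪a, L g⟫ = ⟪L (L.symm a), L g⟫ := by rw [L.apply_symm_apply]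
        _ = ⟪L.symm a, g⟫ := L.inner_map_map _ g
        _ = ⟪b, g⟫ := by rw [hLsa]
        _ = Y * g 0 := by
            rw [hbdef]
            simp [EuclideanSpace.inner_single_left]
    simp only [h1, L.norm_map]
  rw [step1]
  -- step 2: indicator form, coordinates
  rw [← MeasureTheory.integral_indicator measurableSet_closedBall]
  set F : ℝ × ℝ × ℝ → ℂ := fun z => if z.1^2 + (z.2.1^2 + z.2.2^2) ≤ R^2 then
      Complex.exp (Complex.I * ((Y * z.1 : ℝ) : ℂ)) *
        ((Real.sin (Real.sqrt (z.1^2 + (z.2.1^2 + z.2.2^2)) * X) /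
          (Real.sqrt (z.1^2 + (z.2.1^2 + z.2.2^2)) * X) : ℝ) : ℂ) else 0 with hFdef
  set Φ : (Fin 3 → ℝ) ≃ᵐ ℝ × ℝ × ℝ :=
    (MeasurableEquiv.piFinSuccAbove (fun _ : Fin 3 => ℝ) 0).trans
      ((MeasurableEquiv.refl ℝ).prodCongr (MeasurableEquiv.finTwoArrow)) with hΦdef
  have claim1 : ∀ g : V3, Set.indicator (closedBall (0:V3) R)
      (fun g => Complex.exp (Complex.I * ((Y * g 0 : ℝ) : ℂ)) *
        ((Real.sin (‖g‖ * X) / (‖g‖ * X) : ℝ) : ℂ)) g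
      = F (Φ (((MeasurableEquiv.toLp 2 (Fin 3 → ℝ)).symm) g)) := by
    intro g
    have hcoord : Φ (((MeasurableEquiv.toLp 2 (Fin 3 → ℝ)).symm) g) = (g 0, g 1, g 2) := rfl
    rw [hcoord]
    have hs : (0:ℝ) ≤ (g 0)^2 + ((g 1)^2 + (g 2)^2) := by positivity
    have hnorm : ‖g‖ = Real.sqrt ((g 0)^2 + ((g 1)^2 + (g 2)^2)) := by
      rw [EuclideanSpace.norm_eq, Fin.sum_univ_three]
      congr 1
      simp [Real.norm_eq_abs, sq_abs]
      ring
    have hmem : g ∈ closedBall (0:V3) R ↔ (g 0)^2 + ((g 1)^2 + (g 2)^2) ≤ R^2 := by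
      rw [mem_closedBall_zero_iff, hnorm]
      constructor
      · intro h
        have h2 := pow_le_pow_left₀ (Real.sqrt_nonneg _) h 2
        rwa [Real.sq_sqrt hs] at h2
      · intro h
        have h2 := Real.sqrt_le_sqrt h
        rwa [Real.sqrt_sq hR.le] at h2
    by_cases h : g ∈ closedBall (0:V3) R
    · rw [Set.indicator_of_mem h]
      simp only [hFdef]
      rw [if_pos (hmem.1 h), hnorm]
    · rw [Set.indicator_of_notMem h]
      simp only [hFdef]
      rw [if_neg (fun hc => h (hmem.2 hc))]
  simp only [claim1]
  -- step 3: transfer to ℝ × ℝ × ℝ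
  rw [(EuclideanSpace.volume_preserving_symm_measurableEquiv_toLp (Fin 3)).integral_comp
    ((MeasurableEquiv.toLp 2 (Fin 3 → ℝ)).symm).measurableEmbedding (fun x => F (Φ x))]
  have hΦmp : MeasurePreserving Φ := by
    have h1 := MeasureTheory.volume_preserving_piFinSuccAbove (fun _ : Fin 3 => ℝ) 0
    have h2 : MeasurePreserving (⇑((MeasurableEquiv.refl ℝ).prodCongr
        (MeasurableEquiv.finTwoArrow : (Fin 2 → ℝ) ≃ᵐ ℝ × ℝ))) := by
      have := (MeasurePreserving.id (volume : Measure ℝ)).prod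
        (MeasureTheory.volume_preserving_finTwoArrow ℝ)
      rw [← Measure.volume_eq_prod] at this
      convert this using 1
      exacts [rfl, Measure.volume_eq_prod ℝ (ℝ × ℝ)]
    exact h2.comp h1
  rw [hΦmp.integral_comp Φ.measurableEmbedding F]
  -- step 4: integrability of F
  set S : Set (ℝ × ℝ × ℝ) := {z | z.1^2 + (z.2.1^2 + z.2.2^2) ≤ R^2} with hSdef
  have hScl : IsClosed S := by
    have : S = (fun z : ℝ × ℝ × ℝ => z.1^2 + (z.2.1^2 + z.2.2^2)) ⁻¹' (Set.Iic (R^2)) := rfl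
    rw [this]
    exact IsClosed.preimage (by fun_prop) isClosed_Iic
  have hSsub : S ⊆ closedBall 0 R := by
    intro z hz
    have hz' : z.1^2 + (z.2.1^2 + z.2.2^2) ≤ R^2 := hz
    rw [mem_closedBall_zero_iff, Prod.norm_def, Prod.norm_def]
    have h1 : |z.1| ≤ R := by nlinarith [sq_abs z.1, abs_nonneg z.1, sq_nonneg z.2.1, sq_nonneg z.2.2]
    have h2 : |z.2.1| ≤ R := by nlinarith [sq_abs z.2.1, abs_nonneg z.2.1, sq_nonneg z.1, sq_nonneg z.2.2]
    have h3 : |z.2.2| ≤ R := by nlinarith [sq_abs z.2.2, abs_nonneg z.2.2, sq_nonneg z.1, sq_nonneg z.2.1]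
    simp only [Real.norm_eq_abs]
    exact max_le h1 (max_le h2 h3)
  have hSfin : volume S < ⊤ :=
    (((isCompact_closedBall (0 : ℝ × ℝ × ℝ) R).of_isClosed_subset hScl hSsub)).measure_lt_top
  set u : ℝ × ℝ × ℝ → ℂ := fun z =>
      Complex.exp (Complex.I * ((Y * z.1 : ℝ) : ℂ)) *
        ((Real.sin (Real.sqrt (z.1^2 + (z.2.1^2 + z.2.2^2)) * X) /
          (Real.sqrt (z.1^2 + (z.2.1^2 + z.2.2^2)) * X) : ℝ) : ℂ) with hudef
  have hFind : F = Set.indicator S u := by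
    funext z
    by_cases h : z.1^2 + (z.2.1^2 + z.2.2^2) ≤ R^2
    · rw [Set.indicator_of_mem (show z ∈ S from h)]
      simp only [hFdef, hudef]
      rw [if_pos h]
    · rw [Set.indicator_of_notMem (show z ∉ S from h)]
      simp only [hFdef]
      rw [if_neg h]
  have humeas : AEStronglyMeasurable u volume := by
    apply Measurable.aestronglyMeasurable
    apply Measurable.mul
    · exact (Complex.continuous_exp.comp (by fun_prop :
        Continuous fun z : ℝ × ℝ × ℝ => Complex.I * ((Y * z.1 : ℝ) : ℂ))).measurable
    · apply Complex.measurable_ofReal.comp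
      apply Measurable.div
      · exact (Real.continuous_sin.comp ((Real.continuous_sqrt.comp (by fun_prop)).mul
          continuous_const)).measurable
      · exact ((Real.continuous_sqrt.comp (by fun_prop)).mul continuous_const).measurable
  have hFint : Integrable F volume := by
    rw [hFind, integrable_indicator_iff hScl.measurableSet]
    apply Measure.integrableOn_of_bounded hSfin.ne humeas
    filter_upwards with z
    rw [hudef]
    simp only [norm_mul]
    have h1 : ‖Complex.exp (Complex.I * ((Y * z.1 : ℝ) : ℂ))‖ = 1 := by
      rw [mul_comm, Complex.norm_exp_ofReal_mul_I]
    rw [h1, one_mul, Complex.norm_real, Real.norm_eq_abs]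
    exact aux_sinc_bound _
  -- step 5: Fubini
  rw [Measure.volume_eq_prod] at hFint ⊢
  rw [MeasureTheory.integral_prod F hFint]
  -- step 6: slice computation a.e.
  have hnull : volume ({-R, 0, R} : Set ℝ) = 0 :=
    Set.Countable.measure_zero (Set.to_countable _) _
  have hae : (fun t => ∫ y : ℝ × ℝ, F (t, y)) =ᵐ[volume]
      Set.indicator (Set.Ioo (-R) R) (fun t => Complex.exp (Complex.I * ((Y*t : ℝ):ℂ)) *
        ((2*π*(Real.cos (t*X) - Real.cos (R*X))/X^2 : ℝ) : ℂ)) := by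
    have hcompl : ∀ᵐ t : ℝ, t ∉ ({-R, 0, R} : Set ℝ) :=
      (MeasureTheory.compl_mem_ae_iff).2 hnull
    filter_upwards [hcompl] with t ht
    simp only [Set.mem_insert_iff, Set.mem_singleton_iff, not_or] at ht
    obtain ⟨ht1, ht2, ht3⟩ := ht
    have htabs : |t| ≠ R := by
      intro h
      rcases abs_eq hR.le |>.1 h with h' | h'
      · exact ht3 h'
      · exact ht1 h'
    rcases lt_or_gt_of_ne htabs with hlt | hgt
    · have hFy : (∫ y : ℝ × ℝ, F (t, y)) = ∫ y : ℝ × ℝ, (if t^2 + (y.1^2 + y.2^2) ≤ R^2 then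
          Complex.exp (Complex.I * ((Y*t : ℝ) : ℂ)) *
            ((Real.sin (Real.sqrt (t^2+(y.1^2+y.2^2)) * X) /
              (Real.sqrt (t^2+(y.1^2+y.2^2)) * X) : ℝ) : ℂ) else 0) := rfl
      rw [hFy, aux_slice R X Y t hR hX ht2 hlt]
      rw [Set.indicator_of_mem (Set.mem_Ioo.2 (abs_lt.1 hlt))]
    · have hz : ∀ y : ℝ × ℝ, F (t, y) = 0 := by
        intro y
        rw [hFdef]
        simp only
        rw [if_neg]
        nlinarith [sq_abs t, sq_nonneg y.1, sq_nonneg y.2, abs_nonneg t]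
      rw [Set.indicator_of_notMem]
      · simp only [hz, integral_zero]
      · rw [Set.mem_Ioo]
        rintro ⟨h1, h2⟩
        exact absurd (abs_lt.2 ⟨h1, h2⟩) (not_lt.2 hgt.le)
  rw [MeasureTheory.integral_congr_ae hae]
  exact aux_outer R X Y hR hX ha hXY

end
end

section
/- Suppose f : ℝ³ → ℝ is measurable, nonnegative, and satisfies f(v) ≤ c·exp(−k|v|²) for all v ∈ ℝ³, where c, k > 0, and let B̃ > 0 and 0 ≤ λ ≤ 1. Then for every v ∈ ℝ³, the integrand of the Boltzmann collision operator is absolutely integrable: ∫_{g ∈ ℝ³} ∫_{Θ ∈ S²} | f(v + (g − |g|Θ)/2) f(v + (g + |g|Θ)/2) − f(v) f(v+g) | · B̃|g|^λ dΘ dg < ∞, so that Q(f,f)(v) is well defined. -/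
open MeasureTheory Real Metric Filter
open scoped RealInnerProductSpace

noncomputable section

lemma gauss_int (a : ℝ) (ha : 0 < a) : Integrable (fun g : V3 => Real.exp (-a * ‖g‖ ^ 2)) := by
  have h := (GaussianFourier.integrable_cexp_neg_mul_sq_norm_add (V := V3)
    (b := (a : ℂ)) (by simpa using ha) 0 0).norm
  refine h.congr (Filter.Eventually.of_forall fun g => ?_)
  simp [Complex.norm_exp, ← Complex.ofReal_pow]

lemma parallelo (a b : V3) : ‖a - b‖ ^ 2 + ‖a + b‖ ^ 2 = 2 * (‖a‖ ^ 2 + ‖b‖ ^ 2) := by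
  have := parallelogram_law_with_norm ℝ a b
  nlinarith [this]

set_option maxHeartbeats 800000 in
/-- for `0 ≤ f ≤ c e^{−k|·|²}` measurable, `B̃ > 0`, `0 ≤ λ ≤ 1`, the integrand of
the Boltzmann collision operator is absolutely integrable at every `v`:
`∫_{g ∈ ℝ³} ∫_{Θ ∈ S²} |f(v′)f(w′) − f(v)f(v+g)| B̃‖g‖^λ dΘ dg < ∞`,
so that `Q(f,f)(v)` is well defined. -/
theorem collision_integrand_integrable (c k Btil lam : ℝ) (hc : 0 < c) (hk : 0 < k)
    (hB : 0 < Btil) (hlam0 : 0 ≤ lam) (hlam1 : lam ≤ 1) (f : V3 → ℝ)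
    (hf_meas : Measurable f) (hf_nonneg : ∀ v, 0 ≤ f v)
    (hf_bound : ∀ v : V3, f v ≤ c * Real.exp (-k * ‖v‖ ^ 2)) (v : V3) :
    (∫⁻ g : V3, ∫⁻ Θ : sphere (0 : V3) 1,
        ENNReal.ofReal
          (|f (v + (1 / 2 : ℝ) • (g - ‖g‖ • (Θ : V3))) *
                f (v + (1 / 2 : ℝ) • (g + ‖g‖ • (Θ : V3))) - f v * f (v + g)| *
            (Btil * ‖g‖ ^ lam)) ∂sphereMeasure) < ⊤ := by
  set C : ℝ := 2 * c ^ 2 * Btil * Real.exp (1 / k) with hC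
  have hC0 : 0 < C := by positivity
  -- pointwise bound
  have key : ∀ (g : V3) (Θ : sphere (0 : V3) 1),
      |f (v + (1 / 2 : ℝ) • (g - ‖g‖ • (Θ : V3))) *
          f (v + (1 / 2 : ℝ) • (g + ‖g‖ • (Θ : V3))) - f v * f (v + g)| *
        (Btil * ‖g‖ ^ lam) ≤ C * Real.exp (-(k / 4) * ‖g‖ ^ 2) := by
    intro g Θ
    -- each product is ≤ c² exp(-(k/2)‖g‖²)
    have hgen : ∀ a b : V3, ‖g‖ ^ 2 / 2 ≤ ‖a‖ ^ 2 + ‖b‖ ^ 2 →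
        f a * f b ≤ c ^ 2 * Real.exp (-(k / 2) * ‖g‖ ^ 2) := by
      intro a b hab
      have h1 : f a * f b ≤ (c * Real.exp (-k * ‖a‖ ^ 2)) * (c * Real.exp (-k * ‖b‖ ^ 2)) :=
        mul_le_mul (hf_bound a) (hf_bound b) (hf_nonneg b) (by positivity)
      have h2 : (c * Real.exp (-k * ‖a‖ ^ 2)) * (c * Real.exp (-k * ‖b‖ ^ 2))
          = c ^ 2 * Real.exp (-k * ‖a‖ ^ 2 + -k * ‖b‖ ^ 2) := by
        rw [Real.exp_add]; ring
      have h3 : Real.exp (-k * ‖a‖ ^ 2 + -k * ‖b‖ ^ 2) ≤ Real.exp (-(k / 2) * ‖g‖ ^ 2) := by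
        apply Real.exp_le_exp.mpr; nlinarith
      calc f a * f b ≤ _ := h1
        _ = _ := h2
        _ ≤ c ^ 2 * Real.exp (-(k / 2) * ‖g‖ ^ 2) := by
            exact mul_le_mul_of_nonneg_left h3 (by positivity)
    have hΘ : ‖(Θ : V3)‖ = 1 := norm_eq_of_mem_sphere Θ
    -- first geometric fact
    have e1 : v + (1 / 2 : ℝ) • (g - ‖g‖ • (Θ : V3)) =
        (v + (1 / 2 : ℝ) • g) - (1 / 2 : ℝ) • (‖g‖ • (Θ : V3)) := by module
    have e2 : v + (1 / 2 : ℝ) • (g + ‖g‖ • (Θ : V3)) =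
        (v + (1 / 2 : ℝ) • g) + (1 / 2 : ℝ) • (‖g‖ • (Θ : V3)) := by module
    have hb1 : ‖(1 / 2 : ℝ) • (‖g‖ • (Θ : V3))‖ = ‖g‖ / 2 := by
      rw [norm_smul, norm_smul, hΘ]
      simp [Real.norm_eq_abs, abs_of_nonneg (norm_nonneg g)]
      ring
    have geo1 : ‖g‖ ^ 2 / 2 ≤ ‖v + (1 / 2 : ℝ) • (g - ‖g‖ • (Θ : V3))‖ ^ 2 +
        ‖v + (1 / 2 : ℝ) • (g + ‖g‖ • (Θ : V3))‖ ^ 2 := by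
      rw [e1, e2, parallelo, hb1]
      have := sq_nonneg ‖v + (1 / 2 : ℝ) • g‖
      nlinarith [norm_nonneg g]
    have e3 : v = (v + (1 / 2 : ℝ) • g) - (1 / 2 : ℝ) • g := by module
    have e4 : v + g = (v + (1 / 2 : ℝ) • g) + (1 / 2 : ℝ) • g := by module
    have hb2 : ‖(1 / 2 : ℝ) • g‖ = ‖g‖ / 2 := by
      rw [norm_smul]; simp [Real.norm_eq_abs]; ring
    have geo2 : ‖g‖ ^ 2 / 2 ≤ ‖v‖ ^ 2 + ‖v + g‖ ^ 2 := by
      have hp := parallelo (v + (1 / 2 : ℝ) • g) ((1 / 2 : ℝ) • g)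
      rw [← e3, ← e4, hb2] at hp
      nlinarith [sq_nonneg ‖v + (1 / 2 : ℝ) • g‖, norm_nonneg g]
    have hA := hgen _ _ geo1
    have hB' := hgen _ _ geo2
    have hAnn : 0 ≤ f (v + (1 / 2 : ℝ) • (g - ‖g‖ • (Θ : V3))) *
        f (v + (1 / 2 : ℝ) • (g + ‖g‖ • (Θ : V3))) :=
      mul_nonneg (hf_nonneg _) (hf_nonneg _)
    have hBnn : 0 ≤ f v * f (v + g) := mul_nonneg (hf_nonneg _) (hf_nonneg _)
    have habs : |f (v + (1 / 2 : ℝ) • (g - ‖g‖ • (Θ : V3))) *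
          f (v + (1 / 2 : ℝ) • (g + ‖g‖ • (Θ : V3))) - f v * f (v + g)| ≤
        2 * c ^ 2 * Real.exp (-(k / 2) * ‖g‖ ^ 2) := by
      rw [abs_le]
      constructor <;> nlinarith
    -- bound on the kernel factor
    have hker : ‖g‖ ^ lam ≤ Real.exp ‖g‖ := by
      rcases le_or_gt ‖g‖ 1 with h | h
      · calc ‖g‖ ^ lam ≤ 1 := Real.rpow_le_one (norm_nonneg g) h hlam0
          _ ≤ Real.exp ‖g‖ := Real.one_le_exp (norm_nonneg g)
      · calc ‖g‖ ^ lam ≤ ‖g‖ ^ (1 : ℝ) :=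
            Real.rpow_le_rpow_of_exponent_le h.le hlam1
          _ = ‖g‖ := Real.rpow_one _
          _ ≤ Real.exp ‖g‖ := (Real.add_one_le_exp _).trans' (by linarith)
    have hexp : Real.exp (-(k / 2) * ‖g‖ ^ 2) * Real.exp ‖g‖ ≤
        Real.exp (1 / k) * Real.exp (-(k / 4) * ‖g‖ ^ 2) := by
      rw [← Real.exp_add, ← Real.exp_add]
      apply Real.exp_le_exp.mpr
      have h1k : k * (1 / k) = 1 := mul_one_div_cancel hk.ne'
      nlinarith [sq_nonneg (k * ‖g‖ - 2), hk, h1k, sq_nonneg ‖g‖]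
    calc |f (v + (1 / 2 : ℝ) • (g - ‖g‖ • (Θ : V3))) *
          f (v + (1 / 2 : ℝ) • (g + ‖g‖ • (Θ : V3))) - f v * f (v + g)| *
        (Btil * ‖g‖ ^ lam)
        ≤ (2 * c ^ 2 * Real.exp (-(k / 2) * ‖g‖ ^ 2)) * (Btil * Real.exp ‖g‖) := by
          apply mul_le_mul habs _ (by positivity) (by positivity)
          exact mul_le_mul_of_nonneg_left hker hB.le
      _ = (2 * c ^ 2 * Btil) * (Real.exp (-(k / 2) * ‖g‖ ^ 2) * Real.exp ‖g‖) := by ring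
      _ ≤ (2 * c ^ 2 * Btil) * (Real.exp (1 / k) * Real.exp (-(k / 4) * ‖g‖ ^ 2)) :=
          mul_le_mul_of_nonneg_left hexp (by positivity)
      _ = C * Real.exp (-(k / 4) * ‖g‖ ^ 2) := by rw [hC]; ring
  -- finish
  have hSfin : sphereMeasure Set.univ < ⊤ := by
    simp only [sphereMeasure]; exact measure_lt_top _ _
  have hint : Integrable (fun g : V3 => C * Real.exp (-(k / 4) * ‖g‖ ^ 2)) :=
    (gauss_int (k / 4) (by positivity)).const_mul C
  calc (∫⁻ g : V3, ∫⁻ Θ : sphere (0 : V3) 1,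
        ENNReal.ofReal
          (|f (v + (1 / 2 : ℝ) • (g - ‖g‖ • (Θ : V3))) *
                f (v + (1 / 2 : ℝ) • (g + ‖g‖ • (Θ : V3))) - f v * f (v + g)| *
            (Btil * ‖g‖ ^ lam)) ∂sphereMeasure)
      ≤ ∫⁻ g : V3, ∫⁻ _Θ : sphere (0 : V3) 1,
          ENNReal.ofReal (C * Real.exp (-(k / 4) * ‖g‖ ^ 2)) ∂sphereMeasure :=
        lintegral_mono fun g => lintegral_mono fun Θ => ENNReal.ofReal_le_ofReal (key g Θ)
    _ = ∫⁻ g : V3, ENNReal.ofReal (C * Real.exp (-(k / 4) * ‖g‖ ^ 2)) * sphereMeasure Set.univ :=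
        lintegral_congr fun g => lintegral_const _
    _ = (∫⁻ g : V3, ENNReal.ofReal (C * Real.exp (-(k / 4) * ‖g‖ ^ 2))) * sphereMeasure Set.univ :=
        lintegral_mul_const' _ _ hSfin.ne
    _ < ⊤ := ENNReal.mul_lt_top hint.lintegral_lt_top hSfin


end
end
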